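/- arXiv:2509.23394 — 3 statements merged into one kernel-verified Lean document; each statement's English description precedes it below -/
import Mathlib

section
/- Let B be a bidirected graph rooted at r, and let C be a nontrivial connected component of the subgraph of B induced by the trail-undirectable edges, with r not a vertex of C. Then there is exactly one trail-directable edge f of B whose natural orientation has its head in C. -/
/-- A bidirected graph: a loopless multigraph together with a signing of each
half-edge (edge-endpoint incidence) by a sign (`true` = `+`, `false` = `-`). -/
structure BidirGraph (V : Type) (E : Type) where
  ends : E → V × V
  sign : E → V → Bool
  loopless : ∀ e : E, (ends e).1 ≠ (ends e).2

namespace BidirGraph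

variable {V E : Type}

/-- The head of an oriented edge `(e, b)`: `b = true` orients `e` from its first
endpoint to its second endpoint. -/
def ohead (B : BidirGraph V E) (oe : E × Bool) : V :=
  if oe.2 then (B.ends oe.1).2 else (B.ends oe.1).1

/-- The tail of an oriented edge. -/
def otail (B : BidirGraph V E) (oe : E × Bool) : V :=
  if oe.2 then (B.ends oe.1).1 else (B.ends oe.1).2

/-- `e` is incident with `v`. -/
def Incident (B : BidirGraph V E) (e : E) (v : V) : Prop :=
  (B.ends e).1 = v ∨ (B.ends e).2 = v

/-- `L` is a trail starting at `v`: a sequence of oriented edges, with no repeated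
underlying edge, consecutive edges sharing a vertex at which they have opposite signs. -/
def IsTrailFrom (B : BidirGraph V E) (v : V) (L : List (E × Bool)) : Prop :=
  (L.map Prod.fst).Nodup ∧
  (∀ oe ∈ L.head?, B.otail oe = v) ∧
  L.Chain' (fun a b => B.ohead a = B.otail b ∧ B.sign a.1 (B.ohead a) ≠ B.sign b.1 (B.ohead a))

/-- The final vertex of a trail starting at `v`. -/
def trailEnd (B : BidirGraph V E) (v : V) (L : List (E × Bool)) : V :=
  match L.getLast? with
  | none => v
  | some oe => B.ohead oe

/-- The internal vertices of a trail: the heads of all edges except the last one. -/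
def Internal (B : BidirGraph V E) (L : List (E × Bool)) : List V :=
  (L.map B.ohead).dropLast

/-- An `r`-trail: a trail starting at `r` with no internal vertex equal to `r`. -/
def IsRTrail (B : BidirGraph V E) (r : V) (L : List (E × Bool)) : Prop :=
  B.IsTrailFrom r L ∧ ∀ v ∈ B.Internal L, v ≠ r

/-- The trail `L` ends at vertex `w` with sign `α`. -/
def EndsAtSigned (B : BidirGraph V E) (L : List (E × Bool)) (w : V) (α : Bool) : Prop :=
  ∃ oe, L.getLast? = some oe ∧ B.ohead oe = w ∧ B.sign oe.1 w = α

/-- A path: a trail with no repeated vertex. -/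
def IsPathFrom (B : BidirGraph V E) (v : V) (L : List (E × Bool)) : Prop :=
  B.IsTrailFrom v L ∧ (v :: L.map B.ohead).Nodup

/-- An almost path: a trail that is trivial or becomes a path after removing its last edge. -/
def IsAlmostPathFrom (B : BidirGraph V E) (v : V) (L : List (E × Bool)) : Prop :=
  B.IsTrailFrom v L ∧ (v :: B.Internal L).Nodup

/-- An edge is trail-undirectable if there are `r`-trails ending in both of its orientations. -/
def TrailUndirectable (B : BidirGraph V E) (r : V) (e : E) : Prop :=
  (∃ L, B.IsRTrail r L ∧ L.getLast? = some (e, true)) ∧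
  (∃ L, B.IsRTrail r L ∧ L.getLast? = some (e, false))

/-- `(e, b)` is the natural orientation of the trail-directable edge `e`: `r`-trails end
in the orientation `(e, b)` but not in the opposite orientation. -/
def NatOrient (B : BidirGraph V E) (r : V) (e : E) (b : Bool) : Prop :=
  (∃ L, B.IsRTrail r L ∧ L.getLast? = some (e, b)) ∧
  ¬ ∃ L, B.IsRTrail r L ∧ L.getLast? = some (e, !b)

/-- An edge is trail-directable if exactly one of its orientations is the final oriented
edge of some `r`-trail. -/
def TrailDirectable (B : BidirGraph V E) (r : V) (e : E) : Prop :=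
  ∃ b, B.NatOrient r e b

/-- `B` is trail-reachable: every edge is the final edge of some `r`-trail. -/
def TrailReachable (B : BidirGraph V E) (r : V) : Prop :=
  ∀ e : E, ∃ L b, B.IsRTrail r L ∧ L.getLast? = some (e, b)

/-- Adjacency of trail-undirectable edges: both undirectable and sharing an endpoint. -/
def UStep (B : BidirGraph V E) (r : V) (a b : E) : Prop :=
  B.TrailUndirectable r a ∧ B.TrailUndirectable r b ∧ ∃ v, B.Incident a v ∧ B.Incident b v

/-- `C` is (the edge set of) a nontrivial trail-undirectable component of `B`: the set of
trail-undirectable edges connected to some trail-undirectable edge `e` inside the subgraph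
induced by the trail-undirectable edges. -/
def IsUComp (B : BidirGraph V E) (r : V) (C : Set E) : Prop :=
  ∃ e, B.TrailUndirectable r e ∧ C = {f | Relation.ReflTransGen (B.UStep r) e f}

/-- `v` is a vertex of the edge set `C` (i.e. an endpoint of one of its edges). -/
def VC (B : BidirGraph V E) (C : Set E) (v : V) : Prop :=
  ∃ e ∈ C, B.Incident e v

/-- `B` is edge-clean: the root lies in no nontrivial trail-undirectable component. -/
def EdgeClean (B : BidirGraph V E) (r : V) : Prop :=
  ¬ ∃ C : Set E, B.IsUComp r C ∧ B.VC C r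

/-- `B` is clean: there is no nontrivial almost path starting and ending at `r`. -/
def Clean (B : BidirGraph V E) (r : V) : Prop :=
  ¬ ∃ L, L ≠ ([] : List (E × Bool)) ∧ B.IsAlmostPathFrom r L ∧ B.trailEnd r L = r

/-- A vertex is trail-solid if it is the root, or the head of the natural orientation of a
trail-directable edge, or incident with no trail-undirectable edge. -/
def TrailSolid (B : BidirGraph V E) (r v : V) : Prop :=
  v = r ∨ (∃ e b, B.NatOrient r e b ∧ B.ohead (e, b) = v) ∨
    (∀ e : E, B.Incident e v → ¬ B.TrailUndirectable r e)

/-- Two trails are edge-disjoint if no underlying edge occurs in both. -/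
def EdgeDisj (L₁ L₂ : List (E × Bool)) : Prop :=
  ∀ (e : E) (b₁ b₂ : Bool), (e, b₁) ∈ L₁ → (e, b₂) ∈ L₂ → False

/-- Two paths are internally vertex-disjoint if they share no internal vertex. -/
def IntDisj (B : BidirGraph V E) (L₁ L₂ : List (E × Bool)) : Prop :=
  ∀ w : V, w ∈ B.Internal L₁ → w ∈ B.Internal L₂ → False

end BidirGraph

namespace Stmt0Aux

open BidirGraph List

variable {V E : Type}

/-- The compatibility relation between consecutive oriented edges of a trail. -/
def Rel (B : BidirGraph V E) (a b : E × Bool) : Prop :=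
  B.ohead a = B.otail b ∧ B.sign a.1 (B.ohead a) ≠ B.sign b.1 (B.ohead a)

/-- Reversal of a single oriented edge. -/
def fl (x : E × Bool) : E × Bool := (x.1, !x.2)

/-- Reversal of a trail segment. -/
def rf (L : List (E × Bool)) : List (E × Bool) := (L.map fl).reverse

section Basic

variable (B : BidirGraph V E)

@[simp] lemma ohead_fl (x : E × Bool) : B.ohead (fl x) = B.otail x := by
  obtain ⟨e, b⟩ := x; cases b <;> simp [fl, BidirGraph.ohead, BidirGraph.otail]

@[simp] lemma otail_fl (x : E × Bool) : B.otail (fl x) = B.ohead x := by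
  obtain ⟨e, b⟩ := x; cases b <;> simp [fl, BidirGraph.ohead, BidirGraph.otail]

@[simp] lemma fl_fst (x : E × Bool) : (fl x).1 = x.1 := rfl

@[simp] lemma fl_fl (x : E × Bool) : fl (fl x) = x := by simp [fl]

lemma fl_pair (e : E) (b : Bool) : fl (e, b) = (e, !b) := rfl

lemma incident_ohead (x : E × Bool) : B.Incident x.1 (B.ohead x) := by
  obtain ⟨e, b⟩ := x; cases b
  · exact Or.inl rfl
  · exact Or.inr rfl

lemma incident_otail (x : E × Bool) : B.Incident x.1 (B.otail x) := by
  obtain ⟨e, b⟩ := x; cases b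
  · exact Or.inr rfl
  · exact Or.inl rfl

lemma incident_cases {e : E} {v : V} (h : B.Incident e v) (c : Bool) :
    B.otail (e, c) = v ∨ B.ohead (e, c) = v := by
  cases c <;> rcases h with h | h <;>
    simp [BidirGraph.ohead, BidirGraph.otail, h]

lemma rel_fl {a b : E × Bool} (h : Rel B a b) : Rel B (fl b) (fl a) := by
  obtain ⟨h1, h2⟩ := h
  refine ⟨by simp [h1], ?_⟩
  simpa [h1] using h2.symm

lemma trail_iff (v : V) (L : List (E × Bool)) :
    B.IsTrailFrom v L ↔ (L.map Prod.fst).Nodup ∧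
      (∀ oe ∈ L.head?, B.otail oe = v) ∧ L.Chain' (Rel B) := Iff.rfl

end Basic

section Lists

/-- Split a list at an element satisfying `P`, first occurrence. -/
lemma split_first {α : Type*} {L : List α} {P : α → Prop} (h : ∃ x ∈ L, P x) :
    ∃ L₁ y L₂, L = L₁ ++ y :: L₂ ∧ P y ∧ ∀ z ∈ L₁, ¬ P z := by
  classical
  induction L with
  | nil => simp at h
  | cons a l ih =>
    by_cases ha : P a
    · exact ⟨[], a, l, rfl, ha, by simp⟩
    · obtain ⟨x, hx, hPx⟩ := h
      rcases (List.mem_cons.mp hx) with rfl | hx'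
      · exact absurd hPx ha
      · obtain ⟨L₁, y, L₂, rfl, hPy, hL₁⟩ := ih ⟨x, hx', hPx⟩
        exact ⟨a :: L₁, y, L₂, rfl, hPy, by
          intro z hz
          rcases List.mem_cons.mp hz with rfl | hz'
          · exact ha
          · exact hL₁ z hz'⟩

lemma eq_dropLast_concat {α : Type*} {L : List α} {a : α} (h : L.getLast? = some a) :
    L = L.dropLast ++ [a] :=
  (List.dropLast_append_getLast? a h).symm

end Lists

section RF

variable (B : BidirGraph V E)

@[simp] lemma rf_map_fst (L : List (E × Bool)) :
    (rf L).map Prod.fst = (L.map Prod.fst).reverse := by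
  simp [rf, List.map_reverse, List.map_map]

lemma rf_chain {L : List (E × Bool)} (h : L.Chain' (Rel B)) : (rf L).Chain' (Rel B) := by
  show List.IsChain _ _
  rw [rf, List.isChain_reverse, List.isChain_map]
  exact (show List.IsChain _ L from h).imp fun a b hab => rel_fl B hab

lemma rf_concat (L : List (E × Bool)) (x : E × Bool) : rf (L ++ [x]) = fl x :: rf L := by
  simp [rf]

lemma rf_head? (L : List (E × Bool)) : (rf L).head? = L.getLast?.map fl := by
  rw [rf, List.head?_reverse, List.getLast?_map]

lemma rf_getLast? (L : List (E × Bool)) : (rf L).getLast? = L.head?.map fl := by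
  rw [rf, List.getLast?_reverse, List.head?_map]

lemma rf_map_ohead (L : List (E × Bool)) :
    (rf L).map B.ohead = (L.map B.otail).reverse := by
  rw [rf, List.map_reverse, List.map_map]
  congr 1
  exact List.map_congr_left fun x _ => ohead_fl B x

lemma rf_ne_nil {L : List (E × Bool)} (h : L ≠ []) : rf L ≠ [] := by
  simp [rf, h]

end RF

section Trails

variable (B : BidirGraph V E) (r : V)

lemma rtrail_nil : B.IsRTrail r [] := by
  refine ⟨⟨by simp, by simp, List.isChain_nil⟩, by simp [BidirGraph.Internal]⟩

lemma internal_of_prefix {A M : List (E × Bool)} {v : V} (hM : M ≠ [])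
    (hv : v ∈ A.map B.ohead) : v ∈ B.Internal (A ++ M) := by
  unfold BidirGraph.Internal
  rw [List.map_append, List.dropLast_append_of_ne_nil (by simpa using hM)]
  exact List.mem_append_left _ hv

lemma rtrail_prefix {A M : List (E × Bool)} (h : B.IsRTrail r (A ++ M)) :
    B.IsRTrail r A := by
  obtain ⟨⟨hnd, hhd, hch⟩, hint⟩ := h
  rcases eq_or_ne M [] with rfl | hMne
  · exact ⟨⟨by simpa using hnd, by simpa using hhd, by simpa using hch⟩, by simpa using hint⟩
  rcases eq_or_ne A [] with rfl | hAne
  · exact rtrail_nil B r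
  refine ⟨⟨?_, ?_, ?_⟩, ?_⟩
  · rw [List.map_append] at hnd
    exact (List.nodup_append'.mp hnd).1
  · intro oe hoe
    exact hhd oe (by rw [List.head?_append_of_ne_nil _ hAne]; exact hoe)
  · exact (List.isChain_append.mp hch).1
  · intro v hv
    refine hint v ?_
    unfold BidirGraph.Internal at hv ⊢
    rw [List.map_append, List.dropLast_append_of_ne_nil (by simpa using hMne)]
    exact List.mem_append_left _ ((List.dropLast_sublist _).mem hv)

lemma map_otail_mem {M : List (E × Bool)} {v : V} (hch : M.Chain' (Rel B))
    (hhd : ∀ m ∈ M.head?, B.otail m = v) :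
    ∀ x ∈ M, B.otail x = v ∨ B.otail x ∈ M.map B.ohead := by
  induction M generalizing v with
  | nil => simp
  | cons m M ih =>
    intro x hx
    rcases List.mem_cons.mp hx with rfl | hx'
    · exact Or.inl (hhd x (by simp))
    · have hch' := (List.isChain_cons.mp hch)
      have := ih hch'.2 (fun y hy => (hch'.1 y hy).1.symm) x hx'
      rcases this with h | h
      · exact Or.inr (by simp [h])
      · exact Or.inr (by simp; right; simpa using h)

lemma mem_map_ohead_split {T : List (E × Bool)} {t : E × Bool} {v : V}
    (hlast : T.getLast? = some t) (hv : v ∈ T.map B.ohead) :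
    v ∈ B.Internal T ∨ v = B.ohead t := by
  have hT : T = T.dropLast ++ [t] := eq_dropLast_concat hlast
  rw [hT, List.map_append] at hv
  rcases List.mem_append.mp hv with h | h
  · left
    unfold BidirGraph.Internal
    rw [hT, List.map_append, List.dropLast_append_of_ne_nil (by simp)]
    simpa using h
  · right; simpa using h

/-- Concatenating a trail segment onto an `r`-trail. -/
lemma concat {T M : List (E × Bool)} {t : E × Bool}
    (hT : B.IsRTrail r T) (hlast : T.getLast? = some t)
    (hthr : B.ohead t ≠ r) (hlink : ∀ m ∈ M.head?, Rel B t m)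
    (hch : M.Chain' (Rel B)) (hnd : (M.map Prod.fst).Nodup)
    (hdisj : ∀ x ∈ M.map Prod.fst, x ∉ T.map Prod.fst)
    (hMr : ∀ v ∈ (M.map B.ohead).dropLast, v ≠ r) :
    B.IsRTrail r (T ++ M) := by
  obtain ⟨⟨hTnd, hThd, hTch⟩, hTint⟩ := hT
  have hTne : T ≠ [] := by rintro rfl; simp at hlast
  refine ⟨⟨?_, ?_, ?_⟩, ?_⟩
  · rw [List.map_append, List.nodup_append']
    exact ⟨hTnd, hnd, fun x hx hx' => hdisj x hx' hx⟩
  · intro oe hoe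
    exact hThd oe (by rwa [List.head?_append_of_ne_nil _ hTne] at hoe)
  · refine List.isChain_append.mpr ⟨hTch, hch, fun x hx y hy => ?_⟩
    rw [hlast] at hx
    cases hx
    exact hlink y hy
  · intro v hv
    rcases eq_or_ne M [] with rfl | hMne
    · exact hTint v (by simpa using hv)
    unfold BidirGraph.Internal at hv
    rw [List.map_append, List.dropLast_append_of_ne_nil (by simpa using hMne)] at hv
    rcases List.mem_append.mp hv with h | h
    · rcases mem_map_ohead_split B hlast h with h' | h'
      · exact hTint v h'
      · exact h' ▸ hthr
    · exact hMr v h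

lemma concat_getLast {T M : List (E × Bool)} {gc : E × Bool} (hM : M.getLast? = some gc) :
    (T ++ M).getLast? = some gc := by
  have : M ≠ [] := by rintro rfl; simp at hM
  rw [List.getLast?_append_of_ne_nil _ this]; exact hM

end Trails
/-- Context for the uniqueness argument: `(f₂,b₂)` is a natural orientation with head
`v₂` and sign `σ` there, and no `r`-trail ends with the reverse of `f₂`. -/
structure Ctx (B : BidirGraph V E) (r : V) (f₂ : E) (b₂ : Bool) (v₂ : V) (σ : Bool) : Prop where
  hnat : ¬ ∃ L, B.IsRTrail r L ∧ L.getLast? = some (f₂, !b₂)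
  hv2 : B.ohead (f₂, b₂) = v₂
  hσ : B.sign f₂ v₂ = σ
  hv2r : v₂ ≠ r

/-- `f₂`-avoiding reachability of an oriented edge. -/
def RA (B : BidirGraph V E) (r : V) (f₂ : E) (gc : E × Bool) : Prop :=
  ∃ L, B.IsRTrail r L ∧ L.getLast? = some gc ∧ f₂ ∉ L.map Prod.fst

/-- The tail segment of an `r`-trail after its (forward) use of `f₂`. -/
structure Seg (B : BidirGraph V E) (r : V) (f₂ : E) (v₂ : V) (σ : Bool)
    (gc : E × Bool) where
  M : List (E × Bool)
  ne : M ≠ []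
  chain : M.Chain' (Rel B)
  nodup : (M.map Prod.fst).Nodup
  avoid : f₂ ∉ M.map Prod.fst
  last : M.getLast? = some gc
  head : ∀ m ∈ M.head?, B.otail m = v₂ ∧ B.sign m.1 v₂ ≠ σ
  headsNe : ∀ v ∈ M.map B.ohead, v ≠ r
  tailsNe : ∀ v ∈ M.map B.otail, v ≠ r

section Splice

variable {B : BidirGraph V E} {r : V} {f₂ : E} {b₂ : Bool} {v₂ : V} {σ : Bool}

/-- Completing the contradiction: an `f₂`-avoiding arrival at `v₂` with sign other
than `σ` lets us traverse `f₂` backwards. -/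
lemma fin (X : Ctx B r f₂ b₂ v₂ σ) {U : List (E × Bool)} {u : E × Bool}
    (hU : B.IsRTrail r U) (hu : U.getLast? = some u) (huh : B.ohead u = v₂)
    (hus : B.sign u.1 v₂ ≠ σ) (huf : f₂ ∉ U.map Prod.fst) : False := by
  apply X.hnat
  refine ⟨U ++ [(f₂, !b₂)], ?_, concat_getLast (by simp)⟩
  refine concat B r hU hu (huh ▸ X.hv2r) ?_ (List.isChain_singleton _) (by simp) ?_ (by simp)
  · intro m hm
    simp only [List.head?_cons, Option.mem_some_iff] at hm
    subst hm
    constructor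
    · rw [huh, show ((f₂, !b₂) : E × Bool) = fl (f₂, b₂) from rfl, otail_fl, X.hv2]
    · rw [huh]
      show B.sign u.1 v₂ ≠ B.sign f₂ v₂
      rw [X.hσ]; exact hus
  · intro x hx
    simp only [List.map_cons, List.map_nil, List.mem_singleton] at hx
    subst hx
    exact huf

/-- Forward splice: jump from the end of `T` onto the segment `M` and follow it to its
end, obtaining an `f₂`-avoiding trail ending with `gc`. -/
lemma spliceFwd {gc : E × Bool} (S : Seg B r f₂ v₂ σ gc) {T : List (E × Bool)}
    {t : E × Bool} (hT : B.IsRTrail r T) (hTlast : T.getLast? = some t)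
    (hTf : f₂ ∉ T.map Prod.fst)
    (hdisj : ∀ x ∈ T.map Prod.fst, x ∉ S.M.map Prod.fst)
    {y : E × Bool} (hy : y ∈ S.M) (hty : B.otail y = B.ohead t)
    (hsgn : B.sign t.1 (B.ohead t) ≠ B.sign y.1 (B.ohead t)) (hwr : B.ohead t ≠ r) :
    RA B r f₂ gc := by
  obtain ⟨M₁, M₂, hsp⟩ := List.append_of_mem hy
  have hchsuf : (y :: M₂).Chain' (Rel B) := by
    have := S.chain; rw [hsp] at this
    exact (List.isChain_append.mp this).2.1
  have hndM : ((M₁ ++ y :: M₂).map Prod.fst).Nodup := hsp ▸ S.nodup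
  rw [List.map_append] at hndM
  have hnd2 := List.nodup_append'.mp hndM
  refine ⟨T ++ (y :: M₂), ?_, ?_, ?_⟩
  · refine concat B r hT hTlast hwr ?_ hchsuf hnd2.2.1 ?_ ?_
    · intro m hm
      simp only [List.head?_cons, Option.mem_some_iff] at hm
      subst hm
      exact ⟨hty.symm, hsgn⟩
    · intro x hx hxT
      exact hdisj x hxT (by rw [hsp, List.map_append]; exact List.mem_append_right _ hx)
    · intro v hv
      refine S.headsNe v ?_
      rw [hsp, List.map_append]
      exact List.mem_append_right _ ((List.dropLast_sublist _).mem hv)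
  · refine concat_getLast ?_
    have := S.last; rw [hsp, List.getLast?_append_of_ne_nil _ (List.cons_ne_nil _ _)] at this
    exact this
  · rw [List.map_append]
    intro hmem
    rcases List.mem_append.mp hmem with h | h
    · exact hTf h
    · exact S.avoid (by rw [hsp, List.map_append]; exact List.mem_append_right _ h)

/-- Backward splice: jump from the end of `T` onto the segment `M` against its direction
and follow it back to `v₂`; then `f₂` can be traversed backwards, a contradiction. -/
lemma spliceBwd (X : Ctx B r f₂ b₂ v₂ σ) {gc : E × Bool} (S : Seg B r f₂ v₂ σ gc)
    {T : List (E × Bool)} {t : E × Bool} (hT : B.IsRTrail r T)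
    (hTlast : T.getLast? = some t) (hTf : f₂ ∉ T.map Prod.fst)
    (hdisj : ∀ x ∈ T.map Prod.fst, x ∉ S.M.map Prod.fst)
    {y : E × Bool} (hy : y ∈ S.M) (hyh : B.ohead y = B.ohead t)
    (hsgn : B.sign t.1 (B.ohead t) ≠ B.sign y.1 (B.ohead t)) (hwr : B.ohead t ≠ r) :
    False := by
  obtain ⟨M₁, M₂, hsp⟩ := List.append_of_mem hy
  have hsp' : S.M = (M₁ ++ [y]) ++ M₂ := by rw [hsp]; simp
  have hchpre : (M₁ ++ [y]).Chain' (Rel B) := by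
    have := S.chain; rw [hsp'] at this
    exact (List.isChain_append.mp this).1
  -- head of M
  obtain ⟨m₀, hm₀⟩ : ∃ m₀, S.M.head? = some m₀ := by
    cases h : S.M.head? with
    | none => exact absurd (List.head?_eq_none_iff.mp h) S.ne
    | some m => exact ⟨m, rfl⟩
  have hm₀good := S.head m₀ hm₀
  have hheadpre : (M₁ ++ [y]).head? = some m₀ := by
    rw [hsp', List.head?_append_of_ne_nil _ (by simp)] at hm₀
    exact hm₀
  have hsub : ∀ x ∈ ((rf (M₁ ++ [y])).map Prod.fst), x ∈ S.M.map Prod.fst := by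
    intro x hx
    rw [rf_map_fst, List.mem_reverse] at hx
    rw [hsp', List.map_append]
    exact List.mem_append_left _ hx
  have hU : B.IsRTrail r (T ++ rf (M₁ ++ [y])) := by
    refine concat B r hT hTlast hwr ?_ (rf_chain B hchpre) ?_ ?_ ?_
    · intro m hm
      rw [rf_head?, List.getLast?_concat, Option.map_some] at hm
      simp only [Option.mem_some_iff] at hm
      subst hm
      exact ⟨by rw [otail_fl, hyh], by rw [fl_fst]; exact hsgn⟩
    · rw [rf_map_fst]
      have := S.nodup; rw [hsp', List.map_append] at this
      exact List.nodup_reverse.mpr (List.nodup_append'.mp this).1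
    · intro x hx hxT
      exact hdisj x hxT (hsub x hx)
    · intro v hv
      refine S.tailsNe v ?_
      have hv' : v ∈ (rf (M₁ ++ [y])).map B.ohead := (List.dropLast_sublist _).mem hv
      rw [rf_map_ohead, List.mem_reverse] at hv'
      rw [hsp', List.map_append]
      exact List.mem_append_left _ hv'
  have hUlast : (T ++ rf (M₁ ++ [y])).getLast? = some (fl m₀) := by
    refine concat_getLast ?_
    rw [rf_getLast?, hheadpre, Option.map_some]
  refine fin X hU hUlast ?_ ?_ ?_
  · rw [ohead_fl, hm₀good.1]
  · rw [fl_fst]; exact hm₀good.2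
  · rw [List.map_append]
    intro hmem
    rcases List.mem_append.mp hmem with h | h
    · exact hTf h
    · exact S.avoid (hsub _ h)

end Splice
section Splice2

variable {B : BidirGraph V E} {r : V} {f₂ : E} {b₂ : Bool} {v₂ : V} {σ : Bool}

/-- Edge splice: if the trail `T` shares an edge with the segment `M`, we can reroute
to obtain either an `f₂`-avoiding trail ending with `gc`, or a contradiction. -/
lemma spliceEdge (X : Ctx B r f₂ b₂ v₂ σ) {gc : E × Bool} (S : Seg B r f₂ v₂ σ gc)
    {T : List (E × Bool)} (hT : B.IsRTrail r T) (hTf : f₂ ∉ T.map Prod.fst)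
    (hshared : ∃ x ∈ T, x.1 ∈ S.M.map Prod.fst) :
    RA B r f₂ gc := by
  obtain ⟨T₁, te, T₂, hTsp, hPte, hT₁⟩ := split_first hshared
  obtain ⟨y, hy, hyfst⟩ := List.mem_map.mp hPte
  have hT' : T = (T₁ ++ [te]) ++ T₂ := by rw [hTsp]; simp
  have hT1' : B.IsRTrail r (T₁ ++ [te]) := rtrail_prefix B r (hT' ▸ hT)
  have hT1'last : (T₁ ++ [te]).getLast? = some te := List.getLast?_concat
  have hT1'f : f₂ ∉ (T₁ ++ [te]).map Prod.fst := by
    intro h; apply hTf; rw [hT', List.map_append]; exact List.mem_append_left _ h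
  obtain ⟨M₁, M₂, hsp⟩ := List.append_of_mem hy
  have hndM' : ((M₁ ++ y :: M₂).map Prod.fst).Nodup := hsp ▸ S.nodup
  rw [List.map_append, List.map_cons] at hndM'
  have hnd2 := List.nodup_append'.mp hndM'
  have hy1M₁ : y.1 ∉ M₁.map Prod.fst := fun h => hnd2.2.2 h (by simp)
  have hy1M₂ : y.1 ∉ M₂.map Prod.fst := (List.nodup_cons.mp hnd2.2.1).1
  have hdisj1 : ∀ x ∈ M₁.map Prod.fst, x ∉ (T₁ ++ [te]).map Prod.fst := by
    intro x hx hmem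
    rw [List.map_append] at hmem
    rcases List.mem_append.mp hmem with h | h
    · obtain ⟨z, hz, rfl⟩ := List.mem_map.mp h
      exact hT₁ z hz (by rw [hsp, List.map_append]; exact List.mem_append_left _ hx)
    · simp only [List.map_cons, List.map_nil, List.mem_singleton] at h
      subst h
      exact hy1M₁ (hyfst ▸ hx)
  have hdisj2 : ∀ x ∈ M₂.map Prod.fst, x ∉ (T₁ ++ [te]).map Prod.fst := by
    intro x hx hmem
    rw [List.map_append] at hmem
    rcases List.mem_append.mp hmem with h | h
    · obtain ⟨z, hz, rfl⟩ := List.mem_map.mp h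
      exact hT₁ z hz
        (by rw [hsp, List.map_append]; exact List.mem_append_right _ (by simp [hx]))
    · simp only [List.map_cons, List.map_nil, List.mem_singleton] at h
      subst h
      exact hy1M₂ (hyfst ▸ hx)
  have hte : te = y ∨ te = fl y := by
    obtain ⟨e1, c1⟩ := te; obtain ⟨e2, c2⟩ := y
    simp only at hyfst
    subst hyfst
    cases c1 <;> cases c2 <;> simp [fl]
  rcases hte with rfl | rfl
  · -- te = y : follow M forward from y
    have hchsuf : (te :: M₂).Chain' (Rel B) := by
      have := S.chain; rw [hsp] at this
      exact (List.isChain_append.mp this).2.1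
    rcases eq_or_ne M₂ [] with rfl | hM₂ne
    · have hgc : gc = te := by
        have := S.last; rw [hsp] at this
        rw [List.getLast?_append_of_ne_nil _ (List.cons_ne_nil _ _)] at this
        simp at this
        exact this.symm
      exact ⟨T₁ ++ [te], hT1', hgc ▸ hT1'last, hT1'f⟩
    · refine ⟨(T₁ ++ [te]) ++ M₂, ?_, ?_, ?_⟩
      · refine concat B r hT1' hT1'last ?_ (List.isChain_cons.mp hchsuf).1
          (List.isChain_cons.mp hchsuf).2 (List.nodup_cons.mp hnd2.2.1).2 hdisj2 ?_
        · exact S.headsNe _ (List.mem_map_of_mem hy)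
        · intro v hv
          refine S.headsNe v ?_
          have hv' := (List.dropLast_sublist _).mem hv
          rw [hsp, List.map_append]
          exact List.mem_append_right _ (by simp only [List.map_cons]; exact List.mem_cons_of_mem _ hv')
      · refine concat_getLast ?_
        have := S.last
        rw [hsp, List.getLast?_append_of_ne_nil _ (List.cons_ne_nil _ _),
          show te :: M₂ = [te] ++ M₂ from rfl,
          List.getLast?_append_of_ne_nil _ hM₂ne] at this
        exact this
      · rw [List.map_append]
        intro hmem
        rcases List.mem_append.mp hmem with h | h
        · exact hT1'f h
        · refine S.avoid ?_
          rw [hsp, List.map_append]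
          refine List.mem_append_right _ ?_
          simp only [List.map_cons]
          exact List.mem_cons_of_mem _ h
  · -- te = fl y : follow M backwards from y to v₂, then reverse through f₂.
    exfalso
    rcases eq_or_ne M₁ [] with rfl | hM₁ne
    · -- y is the first edge of M
      have hhd : S.M.head? = some y := by rw [hsp]; simp
      have hgood := S.head y hhd
      refine fin X hT1' hT1'last ?_ ?_ hT1'f
      · rw [ohead_fl, hgood.1]
      · rw [fl_fst]; exact hgood.2
    · obtain ⟨p, hp⟩ : ∃ p, M₁.getLast? = some p := by
        cases h : M₁.getLast? with
        | none => exact absurd (List.getLast?_eq_none_iff.mp h) hM₁ne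
        | some q => exact ⟨q, rfl⟩
      have hrelpy : Rel B p y := by
        have := S.chain; rw [hsp] at this
        exact (List.isChain_append.mp this).2.2 p hp y (by simp)
      obtain ⟨m₀, hm₀⟩ : ∃ m₀, S.M.head? = some m₀ := by
        cases h : S.M.head? with
        | none => exact absurd (List.head?_eq_none_iff.mp h) S.ne
        | some m => exact ⟨m, rfl⟩
      have hm₀good := S.head m₀ hm₀
      have hm₀M₁ : M₁.head? = some m₀ := by
        rw [hsp, List.head?_append_of_ne_nil _ hM₁ne] at hm₀
        exact hm₀
      have hsub : ∀ x ∈ (rf M₁).map Prod.fst, x ∈ M₁.map Prod.fst := by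
        intro x hx
        rw [rf_map_fst, List.mem_reverse] at hx
        exact hx
      have hU : B.IsRTrail r ((T₁ ++ [fl y]) ++ rf M₁) := by
        refine concat B r hT1' hT1'last ?_ ?_ ?_ ?_ ?_ ?_
        · rw [ohead_fl]
          refine S.tailsNe _ ?_
          rw [hsp, List.map_append]
          exact List.mem_append_right _ (by simp)
        · intro m hm
          rw [rf_head?, hp, Option.map_some] at hm
          simp only [Option.mem_some_iff] at hm
          subst hm
          exact rel_fl B hrelpy
        · refine rf_chain B ?_
          have := S.chain; rw [hsp, show M₁ ++ y :: M₂ = (M₁ ++ [y]) ++ M₂ by simp] at this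
          exact ((List.isChain_append.mp (List.isChain_append.mp this).1).1)
        · rw [rf_map_fst]
          exact List.nodup_reverse.mpr hnd2.1
        · intro x hx
          exact hdisj1 x (hsub x hx)
        · intro v hv
          refine S.tailsNe v ?_
          have hv' := (List.dropLast_sublist _).mem hv
          rw [rf_map_ohead, List.mem_reverse] at hv'
          rw [hsp, List.map_append]
          exact List.mem_append_left _ hv'
      have hUlast : ((T₁ ++ [fl y]) ++ rf M₁).getLast? = some (fl m₀) := by
        refine concat_getLast ?_
        rw [rf_getLast?, hm₀M₁, Option.map_some]
      refine fin X hU hUlast ?_ ?_ ?_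
      · rw [ohead_fl, hm₀good.1]
      · rw [fl_fst]; exact hm₀good.2
      · rw [List.map_append]
        intro hmem
        rcases List.mem_append.mp hmem with h | h
        · exact hT1'f h
        · refine S.avoid ?_
          rw [hsp, List.map_append]
          exact List.mem_append_left _ (hsub _ h)

end Splice2
section GetSeg

variable {B : BidirGraph V E} {r : V} {f₂ : E} {b₂ : Bool} {v₂ : V} {σ : Bool}

/-- Decompose an `r`-trail ending with `gc` and passing through `f₂` into the part
after `f₂`, which is a segment from `v₂`. -/
lemma getSeg (X : Ctx B r f₂ b₂ v₂ σ) {L : List (E × Bool)} {gc : E × Bool}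
    (hL : B.IsRTrail r L) (hlast : L.getLast? = some gc) (hgf : gc.1 ≠ f₂)
    (hgh : B.ohead gc ≠ r) (hmem : f₂ ∈ L.map Prod.fst) :
    Nonempty (Seg B r f₂ v₂ σ gc) := by
  obtain ⟨x, hx, hxf⟩ := List.mem_map.mp hmem
  obtain ⟨L₁, M, hsp⟩ := List.append_of_mem hx
  have hL' : L = (L₁ ++ [x]) ++ M := by rw [hsp]; simp
  have hpre : B.IsRTrail r (L₁ ++ [x]) := rtrail_prefix B r (hL' ▸ hL)
  have hprelast : (L₁ ++ [x]).getLast? = some x := List.getLast?_concat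
  have hxb : x = (f₂, b₂) := by
    have hx2 : x = (f₂, x.2) := by rw [← hxf]
    rcases Bool.eq_or_eq_not x.2 b₂ with h2 | h2
    · rw [hx2, h2]
    · exact absurd ⟨L₁ ++ [x], hpre, by rw [hprelast, hx2, h2]⟩ X.hnat
  subst hxb
  have hMne : M ≠ [] := by
    rintro rfl
    rw [hsp] at hlast
    rw [List.getLast?_concat] at hlast
    cases hlast
    exact hgf rfl
  have hch : (((f₂, b₂)) :: M).Chain' (Rel B) := by
    have := hL.1.2.2
    rw [hsp] at this
    exact (List.isChain_append.mp this).2.1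
  have hlink := (List.isChain_cons.mp hch).1
  have hndL : ((L₁ ++ (f₂, b₂) :: M).map Prod.fst).Nodup := hsp ▸ hL.1.1
  rw [List.map_append, List.map_cons] at hndL
  have hnd2 := List.nodup_append'.mp hndL
  refine ⟨⟨M, hMne, (List.isChain_cons.mp hch).2, (List.nodup_cons.mp hnd2.2.1).2,
    (List.nodup_cons.mp hnd2.2.1).1, ?_, ?_, ?_, ?_⟩⟩
  · rw [hL', List.getLast?_append_of_ne_nil _ hMne] at hlast
    exact hlast
  · intro m hm
    have hrel := hlink m hm
    constructor
    · rw [← hrel.1, X.hv2]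
    · have := hrel.2
      rw [X.hv2, X.hσ] at this
      exact Ne.symm this
  · -- heads of M are ≠ r
    intro v hv
    have hlastM : M.getLast? = some gc := by
      rw [hL', List.getLast?_append_of_ne_nil _ hMne] at hlast
      exact hlast
    rcases mem_map_ohead_split B hlastM hv with h | h
    · refine hL.2 v ?_
      unfold BidirGraph.Internal at h ⊢
      rw [hL', List.map_append, List.dropLast_append_of_ne_nil (by simpa using hMne)]
      exact List.mem_append_right _ h
    · exact h ▸ hgh
  · -- tails of M are ≠ r
    intro v hv
    obtain ⟨m, hm, rfl⟩ := List.mem_map.mp hv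
    rcases map_otail_mem B (List.isChain_cons.mp hch).2
        (fun m' hm' => by rw [← (hlink m' hm').1, X.hv2]) m hm with h | h
    · rw [h]; exact X.hv2r
    · -- tail of m is a head of M
      have hlastM : M.getLast? = some gc := by
        rw [hL', List.getLast?_append_of_ne_nil _ hMne] at hlast
        exact hlast
      rcases mem_map_ohead_split B hlastM h with h' | h'
      · refine hL.2 _ ?_
        unfold BidirGraph.Internal at h' ⊢
        rw [hL', List.map_append, List.dropLast_append_of_ne_nil (by simpa using hMne)]
        exact List.mem_append_right _ h'
      · exact h' ▸ hgh

end GetSeg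
/-- `g` can be reached in both orientations by `f₂`-avoiding `r`-trails. -/
def DGood (B : BidirGraph V E) (r : V) (f₂ g : E) : Prop := ∀ c, RA B r f₂ (g, c)

section Drivers

variable {B : BidirGraph V E} {r : V} {f₂ : E} {b₂ : Bool} {v₂ : V} {σ : Bool}

lemma und_reach {g : E} (h : B.TrailUndirectable r g) (c : Bool) :
    ∃ L, B.IsRTrail r L ∧ L.getLast? = some (g, c) := by
  cases c
  · exact h.2
  · exact h.1

lemma mem_of_getLast {L : List (E × Bool)} {x : E × Bool} (h : L.getLast? = some x) :
    x ∈ L := by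
  rw [eq_dropLast_concat h]
  simp

lemma bothSigns {g : E} (hD : DGood B r f₂ g) {w : V} (hw : B.Incident g w) (hwr : w ≠ r)
    (τ : Bool) :
    ∃ T t, B.IsRTrail r T ∧ f₂ ∉ T.map Prod.fst ∧ T.getLast? = some t ∧
      B.ohead t = w ∧ B.sign t.1 w = τ := by
  obtain ⟨cin, hc⟩ : ∃ c, B.ohead (g, c) = w := by
    rcases hw with h | h
    · exact ⟨false, by simpa [BidirGraph.ohead] using h⟩
    · exact ⟨true, by simpa [BidirGraph.ohead] using h⟩
  rcases Bool.eq_or_eq_not τ (B.sign g w) with rfl | rfl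
  · obtain ⟨T, hT, hTl, hTf⟩ := hD cin
    exact ⟨T, (g, cin), hT, hTf, hTl, hc, rfl⟩
  · obtain ⟨L, hL, hLl, hLf⟩ := hD (!cin)
    have hsplit : L = L.dropLast ++ [(g, !cin)] := eq_dropLast_concat hLl
    have hW : B.IsRTrail r L.dropLast := rtrail_prefix B r (hsplit ▸ hL)
    have hot : B.otail (g, !cin) = w := by
      rw [show ((g, !cin) : E × Bool) = fl (g, cin) from rfl, otail_fl, hc]
    have hWne : L.dropLast ≠ [] := by
      intro h0
      rw [h0] at hsplit
      have := hL.1.2.1 (g, !cin) (by rw [hsplit]; rfl)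
      rw [hot] at this
      exact hwr this
    obtain ⟨t, ht⟩ : ∃ t, L.dropLast.getLast? = some t := by
      cases h : L.dropLast.getLast? with
      | none => exact absurd (List.getLast?_eq_none_iff.mp h) hWne
      | some q => exact ⟨q, rfl⟩
    have hrel : Rel B t (g, !cin) := by
      have := hL.1.2.2
      rw [hsplit] at this
      exact (List.isChain_append.mp this).2.2 t ht _ (by simp)
    have hth : B.ohead t = w := by rw [hrel.1, hot]
    refine ⟨L.dropLast, t, hW, ?_, ht, hth, ?_⟩
    · intro h
      apply hLf
      rw [hsplit, List.map_append]
      exact List.mem_append_left _ h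
    · have := hrel.2
      rw [hth] at this
      exact Bool.eq_not_iff.mpr this

end Drivers
section Step

variable {B : BidirGraph V E} {r : V} {f₂ : E} {b₂ : Bool} {v₂ : V} {σ : Bool}

lemma step (X : Ctx B r f₂ b₂ v₂ σ) {g g' : E} {w : V} (hD : DGood B r f₂ g)
    (hgw : B.Incident g w) (hg'w : B.Incident g' w) (hwr : w ≠ r)
    (hund : B.TrailUndirectable r g') (hg'h : ∀ c, B.ohead (g', c) ≠ r) :
    DGood B r f₂ g' := by
  have hg'f : g' ≠ f₂ := by
    rintro rfl
    exact X.hnat (und_reach hund (!b₂))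
  intro c'
  obtain ⟨L, hL, hLl⟩ := und_reach hund c'
  by_cases hf : f₂ ∈ L.map Prod.fst
  · obtain ⟨S⟩ := getSeg X hL hLl hg'f (hg'h c') hf
    obtain ⟨T, t, hT, hTf, hTl, hth, hts⟩ := bothSigns hD hgw hwr (!(B.sign g' w))
    by_cases hsh : ∃ x ∈ T, x.1 ∈ S.M.map Prod.fst
    · exact spliceEdge X S hT hTf hsh
    · have hdisj : ∀ x ∈ T.map Prod.fst, x ∉ S.M.map Prod.fst := by
        intro x hx hxM
        obtain ⟨z, hz, rfl⟩ := List.mem_map.mp hx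
        exact hsh ⟨z, hz, hxM⟩
      have hyM : (g', c') ∈ S.M := mem_of_getLast S.last
      have hsgn : B.sign t.1 (B.ohead t) ≠ B.sign (g', c').1 (B.ohead t) := by
        rw [hth]
        show B.sign t.1 w ≠ B.sign g' w
        rw [hts]
        exact Bool.not_ne_self _
      rcases incident_cases B hg'w c' with hot | hoh
      · exact spliceFwd S hT hTl hTf hdisj hyM (by rw [hot, hth]) hsgn (by rw [hth]; exact hwr)
      · exact absurd (spliceBwd X S hT hTl hTf hdisj hyM (by rw [hoh, hth]) hsgn
          (by rw [hth]; exact hwr)) not_false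
  · exact ⟨L, hL, hLl, hf⟩

end Step
section Base

variable {B : BidirGraph V E} {r : V} {f₂ : E} {b₂ : Bool} {v₂ : V} {σ : Bool}

lemma base (X : Ctx B r f₂ b₂ v₂ σ) {K : List (E × Bool)} {k : E × Bool} {v₁ : V} {e₁ : E}
    (hK : B.IsRTrail r K) (hKl : K.getLast? = some k) (hkh : B.ohead k = v₁)
    (hKf : f₂ ∉ K.map Prod.fst) (hv1r : v₁ ≠ r) (he₁ : B.Incident e₁ v₁)
    (hund : B.TrailUndirectable r e₁) (he₁h : ∀ c, B.ohead (e₁, c) ≠ r) :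
    DGood B r f₂ e₁ := by
  have he₁f : e₁ ≠ f₂ := by
    rintro rfl
    exact X.hnat (und_reach hund (!b₂))
  obtain ⟨c₀, hc₀⟩ : ∃ c, B.otail (e₁, c) = v₁ := by
    rcases he₁ with h | h
    · exact ⟨true, by simpa [BidirGraph.otail] using h⟩
    · exact ⟨false, by simpa [BidirGraph.otail] using h⟩
  have phase1 : RA B r f₂ (e₁, c₀) := by
    obtain ⟨L, hL, hLl⟩ := und_reach hund c₀
    by_cases hf : f₂ ∈ L.map Prod.fst
    · obtain ⟨S⟩ := getSeg X hL hLl he₁f (he₁h c₀) hf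
      by_cases hsh : ∃ x ∈ K, x.1 ∈ S.M.map Prod.fst
      · exact spliceEdge X S hK hKf hsh
      · have hdisj : ∀ x ∈ K.map Prod.fst, x ∉ S.M.map Prod.fst := by
          intro x hx hxM
          obtain ⟨z, hz, rfl⟩ := List.mem_map.mp hx
          exact hsh ⟨z, hz, hxM⟩
        have hyM : (e₁, c₀) ∈ S.M := mem_of_getLast S.last
        by_cases hβ : B.sign e₁ v₁ = B.sign k.1 v₁
        · have hMsp : S.M = S.M.dropLast ++ [(e₁, c₀)] := eq_dropLast_concat S.last
          rcases eq_or_ne S.M.dropLast [] with h0 | hMne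
          · have hhd : S.M.head? = some (e₁, c₀) := by
              conv_lhs => rw [hMsp, h0]
              rfl
            have hgood := S.head _ hhd
            have hv12 : v₁ = v₂ := by rw [← hc₀, hgood.1]
            exfalso
            refine fin X hK hKl (by rw [hkh, hv12]) ?_ hKf
            rw [← hv12, ← hβ]
            have := hgood.2
            rw [← hv12] at this
            exact this
          · obtain ⟨p, hp⟩ : ∃ p, S.M.dropLast.getLast? = some p := by
              cases h : S.M.dropLast.getLast? with
              | none => exact absurd (List.getLast?_eq_none_iff.mp h) hMne
              | some q => exact ⟨q, rfl⟩
            have hrel : Rel B p (e₁, c₀) := by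
              have := S.chain
              rw [hMsp] at this
              exact (List.isChain_append.mp this).2.2 p hp _ (by simp)
            have hpM : p ∈ S.M := by
              rw [hMsp]
              exact List.mem_append_left _ (mem_of_getLast hp)
            have hph : B.ohead p = v₁ := by rw [hrel.1, hc₀]
            exfalso
            refine spliceBwd X S hK hKl hKf hdisj hpM (by rw [hph, hkh]) ?_
              (by rw [hkh]; exact hv1r)
            rw [hkh]
            have := hrel.2
            rw [hph] at this
            intro h
            exact this (by rw [← hβ] at h; exact h.symm ▸ rfl)
        · refine spliceFwd S hK hKl hKf hdisj hyM (by rw [hc₀, hkh]) ?_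
            (by rw [hkh]; exact hv1r)
          rw [hkh]
          exact fun h => hβ h.symm
    · exact ⟨L, hL, hLl, hf⟩
  have phase2 : RA B r f₂ (e₁, !c₀) := by
    obtain ⟨L₀, hL₀, hL₀l, hL₀f⟩ := phase1
    have hsplit : L₀ = L₀.dropLast ++ [(e₁, c₀)] := eq_dropLast_concat hL₀l
    have hW : B.IsRTrail r L₀.dropLast := rtrail_prefix B r (hsplit ▸ hL₀)
    have hWne : L₀.dropLast ≠ [] := by
      intro h0
      have hL0eq : L₀ = [(e₁, c₀)] := by rw [hsplit, h0]; rfl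
      have := hL₀.1.2.1 (e₁, c₀) (by rw [hL0eq]; rfl)
      rw [hc₀] at this
      exact hv1r this
    obtain ⟨t, ht⟩ : ∃ t, L₀.dropLast.getLast? = some t := by
      cases h : L₀.dropLast.getLast? with
      | none => exact absurd (List.getLast?_eq_none_iff.mp h) hWne
      | some q => exact ⟨q, rfl⟩
    have hrel : Rel B t (e₁, c₀) := by
      have := hL₀.1.2.2
      rw [hsplit] at this
      exact (List.isChain_append.mp this).2.2 t ht _ (by simp)
    have hth : B.ohead t = v₁ := by rw [hrel.1, hc₀]
    have hWf : f₂ ∉ L₀.dropLast.map Prod.fst := by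
      intro h
      apply hL₀f
      rw [hsplit, List.map_append]
      exact List.mem_append_left _ h
    obtain ⟨L', hL', hL'l⟩ := und_reach hund (!c₀)
    by_cases hf : f₂ ∈ L'.map Prod.fst
    · obtain ⟨S⟩ := getSeg X hL' hL'l he₁f (he₁h (!c₀)) hf
      by_cases hsh : ∃ x ∈ L₀.dropLast, x.1 ∈ S.M.map Prod.fst
      · exact spliceEdge X S hW hWf hsh
      · have hdisj : ∀ x ∈ L₀.dropLast.map Prod.fst, x ∉ S.M.map Prod.fst := by
          intro x hx hxM
          obtain ⟨z, hz, rfl⟩ := List.mem_map.mp hx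
          exact hsh ⟨z, hz, hxM⟩
        have hyM : (e₁, !c₀) ∈ S.M := mem_of_getLast S.last
        exfalso
        refine spliceBwd X S hW ht hWf hdisj hyM ?_ ?_ (by rw [hth]; exact hv1r)
        · rw [show ((e₁, !c₀) : E × Bool) = fl (e₁, c₀) from rfl, ohead_fl, hc₀, hth]
        · rw [hth]
          have := hrel.2
          rw [hth] at this
          exact this
    · exact ⟨L', hL', hL'l, hf⟩
  intro c
  rcases Bool.eq_or_eq_not c c₀ with rfl | rfl
  · exact phase1
  · exact phase2

end Base
section Main

variable {B : BidirGraph V E} {r : V}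

lemma ustep_symm : Symmetric (B.UStep r) := by
  rintro a b ⟨ha, hb, v, hav, hbv⟩
  exact ⟨hb, ha, v, hbv, hav⟩

lemma mainl {C : Set E} {e₀ : E}
    (hCeq : C = {f | Relation.ReflTransGen (B.UStep r) e₀ f})
    (he₀ : B.TrailUndirectable r e₀) (hrC : ¬ B.VC C r) {f₁ f₂ : E} {b₁ b₂ : Bool}
    (h2 : B.NatOrient r f₂ b₂) (hv1C : B.VC C (B.ohead (f₁, b₁)))
    (hv2C : B.VC C (B.ohead (f₂, b₂)))
    (hK : ∃ K, B.IsRTrail r K ∧ K.getLast? = some (f₁, b₁) ∧ f₂ ∉ K.map Prod.fst) :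
    False := by
  have memC_und : ∀ g ∈ C, B.TrailUndirectable r g := by
    intro g hg
    rw [hCeq] at hg
    induction hg with
    | refl => exact he₀
    | tail _ h _ => exact h.2.1
  have hVr : ∀ w, B.VC C w → w ≠ r := by
    intro w hw
    rintro rfl
    exact hrC hw
  have X : Ctx B r f₂ b₂ (B.ohead (f₂, b₂)) (B.sign f₂ (B.ohead (f₂, b₂))) :=
    ⟨h2.2, rfl, rfl, hVr _ hv2C⟩
  obtain ⟨e₁, he₁C, he₁i⟩ := hv1C
  obtain ⟨g₂, hg₂C, hg₂i⟩ := hv2C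
  obtain ⟨K, hK1, hK2, hK3⟩ := hK
  have headsNeOf : ∀ g ∈ C, ∀ c, B.ohead (g, c) ≠ r := by
    intro g hg c
    exact hVr _ ⟨g, hg, incident_ohead B (g, c)⟩
  have hbase : DGood B r f₂ e₁ :=
    base X hK1 hK2 rfl hK3 (hVr _ ⟨e₁, he₁C, he₁i⟩) he₁i (memC_und _ he₁C)
      (headsNeOf _ he₁C)
  have he₁RT : Relation.ReflTransGen (B.UStep r) e₀ e₁ := by rw [hCeq] at he₁C; exact he₁C
  have prop : ∀ g, Relation.ReflTransGen (B.UStep r) e₁ g → DGood B r f₂ g := by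
    intro g hg
    induction hg with
    | refl => exact hbase
    | tail hab hbc ih =>
      rename_i b c
      obtain ⟨undb, undc, v, hbv, hcv⟩ := hbc
      have hbC : b ∈ C := by rw [hCeq]; exact he₁RT.trans hab
      have hcC : c ∈ C := by
        rw [hCeq]
        exact (he₁RT.trans hab).tail ⟨undb, undc, v, hbv, hcv⟩
      exact step X ih hbv hcv (hVr v ⟨b, hbC, hbv⟩) undc (headsNeOf _ hcC)
  have hg₂RT : Relation.ReflTransGen (B.UStep r) e₁ g₂ := by
    have h1 : Relation.ReflTransGen (B.UStep r) e₀ g₂ := by rw [hCeq] at hg₂C; exact hg₂C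
    haveI : Std.Symm (B.UStep r) := ⟨fun a b h => ustep_symm h⟩
    exact ((Std.Symm.symm (r := Relation.ReflTransGen (B.UStep r))) _ _ he₁RT).trans h1
  have hDg₂ : DGood B r f₂ g₂ := prop g₂ hg₂RT
  obtain ⟨T, t, hT, hTf, hTl, hth, hts⟩ :=
    bothSigns hDg₂ hg₂i (hVr _ ⟨g₂, hg₂C, hg₂i⟩) (!(B.sign f₂ (B.ohead (f₂, b₂))))
  refine fin X hT hTl hth ?_ hTf
  rw [hts]
  exact Bool.not_ne_self _

lemma exist {C : Set E} {e₀ : E}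
    (hCeq : C = {f | Relation.ReflTransGen (B.UStep r) e₀ f})
    (he₀ : B.TrailUndirectable r e₀) (hrC : ¬ B.VC C r) :
    ∃ f b, B.NatOrient r f b ∧ B.VC C (B.ohead (f, b)) := by
  have memC_und : ∀ g ∈ C, B.TrailUndirectable r g := by
    intro g hg
    rw [hCeq] at hg
    induction hg with
    | refl => exact he₀
    | tail _ h _ => exact h.2.1
  have he₀C : e₀ ∈ C := by rw [hCeq]; exact Relation.ReflTransGen.refl
  obtain ⟨L, hL, hLl⟩ := he₀.1
  have hPlast : B.VC C (B.ohead ((e₀, true) : E × Bool)) :=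
    ⟨e₀, he₀C, incident_ohead B ((e₀, true) : E × Bool)⟩
  obtain ⟨L₁, x, L₂, hsp, hPx, hL₁⟩ :=
    split_first (P := fun z => B.VC C (B.ohead z)) ⟨(e₀, true), mem_of_getLast hLl, hPlast⟩
  have hL' : L = (L₁ ++ [x]) ++ L₂ := by rw [hsp]; simp
  have hpre : B.IsRTrail r (L₁ ++ [x]) := rtrail_prefix B r (hL' ▸ hL)
  have hprelast : (L₁ ++ [x]).getLast? = some x := List.getLast?_concat
  have hnotund : ¬ B.TrailUndirectable r x.1 := by
    intro hund
    have hx1C : x.1 ∈ C := by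
      obtain ⟨e', he'C, hinc⟩ := hPx
      rw [hCeq]
      refine Relation.ReflTransGen.tail ?_ ⟨memC_und _ he'C, hund, B.ohead x, hinc, incident_ohead B x⟩
      rw [hCeq] at he'C
      exact he'C
    have hotC : B.VC C (B.otail x) := ⟨x.1, hx1C, incident_otail B x⟩
    rcases eq_or_ne L₁ [] with rfl | hL₁ne
    · have : B.otail x = r := hL.1.2.1 x (by rw [hsp]; rfl)
      exact hrC (this ▸ hotC)
    · obtain ⟨q, hq⟩ : ∃ q, L₁.getLast? = some q := by
        cases h : L₁.getLast? with
        | none => exact absurd (List.getLast?_eq_none_iff.mp h) hL₁ne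
        | some w => exact ⟨w, rfl⟩
      have hrel : Rel B q x := by
        have := hL.1.2.2
        rw [hsp] at this
        exact (List.isChain_append.mp this).2.2 q hq x (by simp)
      have : B.VC C (B.ohead q) := by rw [hrel.1]; exact hotC
      exact hL₁ q (mem_of_getLast hq) this
  refine ⟨x.1, x.2, ⟨⟨L₁ ++ [x], hpre, by rwa [show ((x.1, x.2) : E × Bool) = x from rfl]⟩, ?_⟩, ?_⟩
  · rintro ⟨L', hL'', hL''l⟩
    apply hnotund
    have h1 : ∃ L, B.IsRTrail r L ∧ L.getLast? = some (x.1, x.2) :=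
      ⟨L₁ ++ [x], hpre, by rwa [show ((x.1, x.2) : E × Bool) = x from rfl]⟩
    have h2 : ∃ L, B.IsRTrail r L ∧ L.getLast? = some (x.1, !x.2) := ⟨L', hL'', hL''l⟩
    cases hx2 : x.2
    · rw [hx2] at h1 h2
      exact ⟨by simpa using h2, by simpa using h1⟩
    · rw [hx2] at h1 h2
      exact ⟨by simpa using h1, by simpa using h2⟩
  · rwa [show ((x.1, x.2) : E × Bool) = x from rfl]

lemma wlogK {x y : E} {bx by' : Bool} (hx : B.NatOrient r x bx) (hy : B.NatOrient r y by')
    (hne : x ≠ y) :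
    (∃ K, B.IsRTrail r K ∧ K.getLast? = some (x, bx) ∧ y ∉ K.map Prod.fst) ∨
    (∃ K, B.IsRTrail r K ∧ K.getLast? = some (y, by') ∧ x ∉ K.map Prod.fst) := by
  obtain ⟨L, hL, hLl⟩ := hy.1
  by_cases hm : x ∈ L.map Prod.fst
  · left
    obtain ⟨z, hz, hzf⟩ := List.mem_map.mp hm
    obtain ⟨L₁, L₂, hsp⟩ := List.append_of_mem hz
    have hL' : L = (L₁ ++ [z]) ++ L₂ := by rw [hsp]; simp
    have hpre : B.IsRTrail r (L₁ ++ [z]) := rtrail_prefix B r (hL' ▸ hL)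
    have hprelast : (L₁ ++ [z]).getLast? = some z := List.getLast?_concat
    have hzb : z = (x, bx) := by
      have hz2 : z = (x, z.2) := by rw [← hzf]
      rcases Bool.eq_or_eq_not z.2 bx with h2 | h2
      · rw [hz2, h2]
      · exact absurd ⟨L₁ ++ [z], hpre, by rw [hprelast, hz2, h2]⟩ hx.2
    have hL₂ne : L₂ ≠ [] := by
      rintro rfl
      rw [hL', List.append_nil, hprelast] at hLl
      cases hLl
      exact hne hzf.symm
    have hylast : (y, by') ∈ L₂ := by
      have h2 : L₂.getLast? = some (y, by') := by
        rw [hL', List.getLast?_append_of_ne_nil _ hL₂ne] at hLl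
        exact hLl
      exact mem_of_getLast h2
    refine ⟨L₁ ++ [z], hpre, by rw [hprelast, hzb], ?_⟩
    intro hy'
    have hnd := hL.1.1
    rw [hL', List.map_append] at hnd
    exact (List.nodup_append'.mp hnd).2.2 hy' (List.mem_map_of_mem hylast)
  · exact Or.inr ⟨L, hL, hLl, hm⟩

end Main
end Stmt0Aux

open BidirGraph in
/-- In a trail-reachable bidirected graph rooted at `r`, every nontrivial
trail-undirectable component `C` with `r ∉ V(C)` has exactly one trail-directable edge
whose natural orientation has its head in `C`. -/
theorem stmt0 {V E : Type} (B : BidirGraph V E) (r : V)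
    (hreach : B.TrailReachable r)
    (C : Set E) (hC : B.IsUComp r C) (hrC : ¬ B.VC C r) :
    ∃! f : E, ∃ b : Bool, B.NatOrient r f b ∧ B.VC C (B.ohead (f, b)) := by
  obtain ⟨e₀, he₀, hCeq⟩ := hC
  obtain ⟨f, b, hnat, hvc⟩ := Stmt0Aux.exist hCeq he₀ hrC
  refine ⟨f, ⟨b, hnat, hvc⟩, ?_⟩
  rintro y ⟨by', hy, hyvc⟩
  by_contra hne
  rcases Stmt0Aux.wlogK hy hnat hne with ⟨K, h1, h2, h3⟩ | ⟨K, h1, h2, h3⟩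
  · exact Stmt0Aux.mainl hCeq he₀ hrC hnat hyvc hvc ⟨K, h1, h2, h3⟩
  · exact Stmt0Aux.mainl hCeq he₀ hrC hy hvc hyvc ⟨K, h1, h2, h3⟩
end

section
/- Let B be a bidirected graph rooted at r. Then B is edge-clean (i.e., r is not contained in any nontrivial trail-undirectable component) if and only if B contains no nontrivial trail that starts and ends at r with no internal vertex equal to r. -/
namespace BidirGraph

variable {V E : Type}

/-- Flip the orientation of an oriented edge. -/
def flipOE (oe : E × Bool) : E × Bool := (oe.1, !oe.2)

lemma ohead_flip (B : BidirGraph V E) (oe : E × Bool) : B.ohead (flipOE oe) = B.otail oe := by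
  obtain ⟨e, b⟩ := oe; cases b <;> simp [ohead, otail, flipOE]

lemma otail_flip (B : BidirGraph V E) (oe : E × Bool) : B.otail (flipOE oe) = B.ohead oe := by
  obtain ⟨e, b⟩ := oe; cases b <;> simp [ohead, otail, flipOE]

lemma internal_aux (B : BidirGraph V E) :
    ∀ (a : E × Bool) (T : List (E × Bool)),
      List.Chain' (fun x y => B.ohead x = B.otail y) (a :: T) →
      T.map B.otail = ((a :: T).map B.ohead).dropLast
  | _, [], _ => rfl
  | a, b :: t, h => by
    have h1 : B.ohead a = B.otail b := (List.isChain_cons_cons.mp h).1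
    have IH := internal_aux B b t (List.isChain_cons_cons.mp h).2
    simp only [List.map_cons] at IH ⊢
    rw [List.dropLast_cons₂, ← IH, h1]

/-- The reversal of a nontrivial `r`-trail ending at `r` is an `r`-trail, and it ends with
the flip of the first edge of the original trail. -/
lemma reverse_rtrail (B : BidirGraph V E) (r : V) {L : List (E × Bool)}
    (h : B.IsRTrail r L) (hend : B.trailEnd r L = r) (hne : L ≠ []) :
    B.IsRTrail r ((L.map flipOE).reverse) ∧
      ((L.map flipOE).reverse).getLast? = L.head?.map flipOE := by
  obtain ⟨⟨hnd, hstart, hchain⟩, hint⟩ := h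
  obtain ⟨a, T, rfl⟩ := List.exists_cons_of_ne_nil hne
  have hchain1 : List.Chain' (fun x y => B.ohead x = B.otail y) (a :: T) :=
    hchain.imp fun x y hxy => hxy.1
  have hmapfst : ((a :: T).map flipOE).map Prod.fst = (a :: T).map Prod.fst := by
    simp [flipOE]
  have hlast : ∃ z, (a :: T).getLast? = some z := by
    cases hzl : (a :: T).getLast? with
    | none => simp at hzl
    | some z => exact ⟨z, rfl⟩
  obtain ⟨z, hz⟩ := hlast
  have hzr : B.ohead z = r := by
    unfold trailEnd at hend; rw [hz] at hend; exact hend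
  have hInternalEq : B.Internal (((a :: T).map flipOE).reverse) =
      (B.Internal (a :: T)).reverse := by
    unfold Internal
    rw [List.map_reverse, List.dropLast_reverse]
    have : ((a :: T).map flipOE).map B.ohead = (a :: T).map B.otail := by
      rw [List.map_map]; exact List.map_congr_left fun x _ => B.ohead_flip x
    rw [this]
    simp only [List.map_cons, List.tail_cons]
    rw [internal_aux B a T hchain1]
    rfl
  refine ⟨⟨⟨?_, ?_, ?_⟩, ?_⟩, ?_⟩
  · rw [List.map_reverse, hmapfst]
    exact List.nodup_reverse.mpr hnd
  · intro oe hoe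
    rw [List.head?_reverse, List.getLast?_map, hz] at hoe
    simp only [Option.map_some, Option.mem_def, Option.some.injEq] at hoe
    rw [← hoe, B.otail_flip, hzr]
  · show List.IsChain _ _
    rw [List.isChain_reverse, List.isChain_map]
    refine hchain.imp fun x y hxy => ?_
    refine ⟨?_, ?_⟩
    · rw [B.ohead_flip, B.otail_flip, hxy.1]
    · rw [B.ohead_flip, ← hxy.1]
      exact (hxy.2).symm
  · intro v hv
    rw [hInternalEq, List.mem_reverse] at hv
    exact hint v hv
  · rw [List.getLast?_reverse, List.head?_map]

/-- A single oriented edge taken from the start of an `r`-trail is an `r`-trail. -/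
lemma singleton_rtrail (B : BidirGraph V E) (r : V) (a : E × Bool) (T : List (E × Bool))
    (h : B.IsRTrail r (a :: T)) : B.IsRTrail r [a] := by
  obtain ⟨⟨_, hstart, _⟩, _⟩ := h
  refine ⟨⟨by simp, ?_, List.isChain_singleton a⟩, by simp [Internal]⟩
  intro oe hoe
  simp only [List.head?_cons, Option.mem_def, Option.some.injEq] at hoe
  subst hoe
  exact hstart a (by simp)

/-- Every edge of a trail-undirectable component is trail-undirectable. -/
lemma mem_ucomp_undirectable (B : BidirGraph V E) (r : V) {e f : E}
    (he : B.TrailUndirectable r e) (hf : Relation.ReflTransGen (B.UStep r) e f) :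
    B.TrailUndirectable r f := by
  rcases (Relation.ReflTransGen.cases_tail hf) with rfl | ⟨a, _, hstep⟩
  · exact he
  · exact hstep.2.1

end BidirGraph

open BidirGraph in
/-- A rooted bidirected graph is edge-clean (the root lies in no nontrivial
trail-undirectable component) iff it contains no nontrivial trail starting and ending at
`r` with no internal vertex equal to `r`. -/
theorem stmt3 {V E : Type} (B : BidirGraph V E) (r : V) :
    B.EdgeClean r ↔
      ¬ ∃ L : List (E × Bool), L ≠ [] ∧ B.IsRTrail r L ∧ B.trailEnd r L = r := by
  constructor
  · -- edge-clean → no nontrivial returning r-trail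
    intro hclean
    rintro ⟨L, hne, hL, hend⟩
    obtain ⟨a, T, rfl⟩ := List.exists_cons_of_ne_nil hne
    -- the first edge is trail-undirectable and incident with r
    have hsingle : B.IsRTrail r [a] := B.singleton_rtrail r a T hL
    obtain ⟨hrev, hrevlast⟩ := B.reverse_rtrail r hL hend hne
    have hrevlast' : (((a :: T).map flipOE).reverse).getLast? = some (flipOE a) := by
      rw [hrevlast]; rfl
    have hund : B.TrailUndirectable r a.1 := by
      obtain ⟨e, b⟩ := a
      cases b
      · exact ⟨⟨_, hrev, hrevlast'⟩, ⟨[ (e, false) ], hsingle, rfl⟩⟩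
      · exact ⟨⟨[ (e, true) ], hsingle, rfl⟩, ⟨_, hrev, hrevlast'⟩⟩
    have hinc : B.Incident a.1 r := by
      have hstart : B.otail a = r := (hL.1.2.1) a (by simp)
      obtain ⟨e, b⟩ := a
      cases b
      · exact Or.inr (by simpa [otail] using hstart)
      · exact Or.inl (by simpa [otail] using hstart)
    exact hclean ⟨{f | Relation.ReflTransGen (B.UStep r) a.1 f}, ⟨a.1, hund, rfl⟩,
      ⟨a.1, Relation.ReflTransGen.refl, hinc⟩⟩
  · -- no nontrivial returning r-trail → edge-clean
    intro hno
    rintro ⟨C, ⟨e, he, rfl⟩, ⟨f, hfC, hfr⟩⟩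
    have hfund : B.TrailUndirectable r f := B.mem_ucomp_undirectable r he hfC
    obtain ⟨⟨Lt, hLt, hLtlast⟩, ⟨Lf, hLf, hLflast⟩⟩ := hfund
    rcases hfr with h1 | h2
    · -- (ends f).1 = r : the trail ending with (f, false) returns to r
      refine hno ⟨Lf, ?_, hLf, ?_⟩
      · intro h; rw [h] at hLflast; simp at hLflast
      · unfold BidirGraph.trailEnd
        rw [hLflast]
        simpa [ohead] using h1
    · -- (ends f).2 = r : the trail ending with (f, true) returns to r
      refine hno ⟨Lt, ?_, hLt, ?_⟩
      · intro h; rw [h] at hLtlast; simp at hLtlast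
      · unfold BidirGraph.trailEnd
        rw [hLtlast]
        simpa [ohead] using h2
end

section
/- Let B be an edge-clean bidirected graph rooted at r, and let T and T' be proper r-trails of B (each containing at least one trail-directable edge). If T and T' share an edge, then they share a trail-directable edge. -/
namespace BidirGraph
variable {V E : Type}

/-- Reverse an oriented edge. -/
def neg (oe : E × Bool) : E × Bool := (oe.1, !oe.2)

/-- The linking relation between consecutive oriented edges of a trail. -/
def lnk (B : BidirGraph V E) (a b : E × Bool) : Prop :=
  B.ohead a = B.otail b ∧ B.sign a.1 (B.ohead a) ≠ B.sign b.1 (B.ohead a)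

/-- Reverse a trail segment. -/
def revt (L : List (E × Bool)) : List (E × Bool) := (L.map neg).reverse

variable {B : BidirGraph V E} {r : V}

@[simp] lemma fst_neg (oe : E × Bool) : (neg oe).1 = oe.1 := rfl

@[simp] lemma neg_neg (oe : E × Bool) : neg (neg oe) = oe := by
  simp [neg]

@[simp] lemma ohead_neg (oe : E × Bool) : B.ohead (neg oe) = B.otail oe := by
  obtain ⟨e, b⟩ := oe; cases b <;> simp [ohead, otail, neg]

@[simp] lemma otail_neg (oe : E × Bool) : B.otail (neg oe) = B.ohead oe := by
  obtain ⟨e, b⟩ := oe; cases b <;> simp [ohead, otail, neg]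

lemma incident_otail (oe : E × Bool) : B.Incident oe.1 (B.otail oe) := by
  obtain ⟨e, b⟩ := oe; cases b <;> simp [Incident, otail]

lemma lnk_neg_rev {a b : E × Bool} (h : B.lnk a b) : B.lnk (neg b) (neg a) := by
  obtain ⟨h1, h2⟩ := h
  refine ⟨by simp [h1.symm], ?_⟩
  simpa [h1] using h2.symm

lemma isRTrail_iff {L : List (E × Bool)} :
    B.IsRTrail r L ↔ (L.map Prod.fst).Nodup ∧ (∀ oe ∈ L.head?, B.otail oe = r) ∧
      L.Chain' B.lnk ∧ ∀ v ∈ (L.map B.ohead).dropLast, v ≠ r := by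
  constructor
  · rintro ⟨⟨h1, h2, h3⟩, h4⟩
    exact ⟨h1, h2, h3, h4⟩
  · rintro ⟨h1, h2, h3, h4⟩
    exact ⟨⟨h1, h2, h3⟩, h4⟩

lemma IsRTrail.nodupE {L : List (E × Bool)} (h : B.IsRTrail r L) :
    (L.map Prod.fst).Nodup := h.1.1

lemma IsRTrail.headr {L : List (E × Bool)} (h : B.IsRTrail r L) :
    ∀ oe ∈ L.head?, B.otail oe = r := h.1.2.1

lemma IsRTrail.chain {L : List (E × Bool)} (h : B.IsRTrail r L) :
    L.Chain' B.lnk := h.1.2.2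

lemma IsRTrail.intr {L : List (E × Bool)} (h : B.IsRTrail r L) :
    ∀ v ∈ (L.map B.ohead).dropLast, v ≠ r := h.2

end BidirGraph
namespace BidirGraph
variable {V E : Type} {B : BidirGraph V E} {r : V}

lemma head?_append_left {α} {l₁ l₂ : List α} (h : l₁ ≠ []) :
    (l₁ ++ l₂).head? = l₁.head? := by
  cases l₁ with
  | nil => exact absurd rfl h
  | cons a t => rfl

lemma dropLast_reverse' {α} (l : List α) : l.reverse.dropLast = l.tail.reverse := by
  cases l with
  | nil => rfl
  | cons a t => simp [List.reverse_cons, List.dropLast_concat]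

@[simp] lemma map_fst_revt (L : List (E × Bool)) :
    (revt L).map Prod.fst = (L.map Prod.fst).reverse := by
  simp [revt, List.map_reverse, Function.comp]

@[simp] lemma map_ohead_revt (L : List (E × Bool)) :
    (revt L).map B.ohead = (L.map B.otail).reverse := by
  simp [revt, List.map_reverse, Function.comp]

lemma rtrail_prefix {L₁ L₂ : List (E × Bool)} (h : B.IsRTrail r (L₁ ++ L₂)) :
    B.IsRTrail r L₁ := by
  rw [isRTrail_iff] at h ⊢
  obtain ⟨h1, h2, h3, h4⟩ := h
  rw [List.map_append] at h1
  refine ⟨h1.of_append_left, ?_, (List.isChain_append.mp h3).1, ?_⟩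
  · intro oe hoe
    apply h2
    cases L₁ with
    | nil => simp at hoe
    | cons a t => simpa using hoe
  · intro v hv
    apply h4
    rcases List.eq_nil_or_concat L₂ with rfl | ⟨l', a, rfl⟩
    · simpa using hv
    · rw [List.map_append, List.dropLast_append_of_ne_nil (by simp)]
      exact List.mem_append_left _ (List.dropLast_subset _ hv)

lemma otail_tail_eq {L : List (E × Bool)} (h : L.Chain' B.lnk) :
    (L.map B.otail).tail = (L.map B.ohead).dropLast := by
  induction L with
  | nil => rfl
  | cons a t ih =>
    cases t with
    | nil => rfl
    | cons b u =>
      have h1 : B.lnk a b := (List.isChain_cons_cons.mp h).1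
      have ihr := ih (List.isChain_cons_cons.mp h).2
      simp only [List.map_cons, List.tail_cons] at ihr ⊢
      rw [List.dropLast_cons₂, ← h1.1, ihr]

lemma chain_revt {L : List (E × Bool)} (h : L.Chain' B.lnk) :
    (revt L).Chain' B.lnk := by
  unfold List.Chain'
  rw [revt, List.isChain_reverse, List.isChain_map]
  exact List.IsChain.imp (fun a b hab => lnk_neg_rev hab) h

lemma internal_ne_r_of_middle {L₁ L₂ : List (E × Bool)} {a : E × Bool}
    (h : B.IsRTrail r (L₁ ++ a :: L₂)) (h2 : L₂ ≠ []) : B.ohead a ≠ r := by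
  apply h.intr
  rw [List.map_append, List.dropLast_append_of_ne_nil (by simp)]
  apply List.mem_append_right
  rw [List.map_cons, List.dropLast_cons_of_ne_nil (by simpa using h2)]
  exact List.mem_cons_self

end BidirGraph
namespace BidirGraph
variable {V E : Type} {B : BidirGraph V E} {r : V}

/-- Cleanness: no edge with trails ending in both orientations is incident with `r`. -/
lemma noendr (hclean : B.EdgeClean r) {g : E} {γ : Bool} {L M : List (E × Bool)}
    (h1 : B.IsRTrail r L) (e1 : L.getLast? = some (g, γ))
    (h2 : B.IsRTrail r M) (e2 : M.getLast? = some (g, !γ))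
    (hinc : B.Incident g r) : False := by
  have hund : B.TrailUndirectable r g := by
    cases γ
    · exact ⟨⟨M, h2, by simpa using e2⟩, ⟨L, h1, e1⟩⟩
    · exact ⟨⟨L, h1, e1⟩, ⟨M, h2, by simpa using e2⟩⟩
  exact hclean ⟨_, ⟨g, hund, rfl⟩, ⟨g, Relation.ReflTransGen.refl, hinc⟩⟩

/-- First-edge lemma: no trail ends in the reverse of the first edge of a trail. -/
lemma fe (hclean : B.EdgeClean r) {oe : E × Bool} {L M : List (E × Bool)}
    (h1 : B.IsRTrail r (oe :: L)) (h2 : B.IsRTrail r M)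
    (h3 : M.getLast? = some (neg oe)) : False := by
  have hx : B.IsRTrail r [oe] := rtrail_prefix (L₁ := [oe]) (L₂ := L) (by simpa using h1)
  have hr : B.otail oe = r := h1.headr oe (by simp)
  refine noendr hclean (g := oe.1) (γ := oe.2) hx (by simp) h2 (by simpa [neg] using h3) ?_
  rw [← hr]; exact incident_otail oe

/-- Append a single compatible edge to an r-trail. -/
lemma append_one {L : List (E × Bool)} {a x : E × Bool}
    (h : B.IsRTrail r L) (hl : L.getLast? = some a) (hx : B.lnk a x)
    (hr : B.otail x ≠ r) (hm : x.1 ∉ L.map Prod.fst) :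
    B.IsRTrail r (L ++ [x]) := by
  obtain ⟨L', hL'⟩ := List.getLast?_eq_some_iff.mp hl
  rw [isRTrail_iff] at h ⊢
  obtain ⟨h1, h2, h3, h4⟩ := h
  refine ⟨?_, ?_, ?_, ?_⟩
  · rw [List.map_append]
    refine (List.nodup_append').mpr ⟨h1, by simp, by simpa using hm⟩
  · intro oe hoe
    apply h2
    rwa [head?_append_left (by rintro rfl; simp at hl)] at hoe
  · unfold List.Chain'
    rw [List.isChain_append]
    refine ⟨h3, by simp, ?_⟩
    intro a' ha' y hy
    simp only [List.head?_cons, Option.mem_some_iff] at hy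
    rw [hl] at ha'
    simp only [Option.mem_some_iff] at ha'
    rw [← hy, ← ha']
    exact hx
  · intro v hv
    simp only [List.map_append, List.map_cons, List.map_nil, List.dropLast_concat] at hv
    subst hL'
    rw [List.map_append] at hv
    rcases List.mem_append.mp hv with hvl | hvr
    · refine h4 v ?_
      simp only [List.map_append, List.map_cons, List.map_nil, List.dropLast_concat]
      exact hvl
    · simp only [List.map_cons, List.map_nil, List.mem_singleton] at hvr
      subst hvr
      rw [hx.1]
      exact hr

/-- Splice: replace the approach to an oriented edge `x` by another trail reaching `x`. -/
lemma swap_prefix {U Vp W : List (E × Bool)} {x : E × Bool}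
    (h₁ : B.IsRTrail r (U ++ [x]))
    (h₂ : B.IsRTrail r (Vp ++ x :: W))
    (hdisj : ∀ e ∈ W.map Prod.fst, e ∉ U.map Prod.fst) :
    B.IsRTrail r (U ++ x :: W) := by
  rw [isRTrail_iff] at h₁ h₂ ⊢
  obtain ⟨n1, d1, c1, i1⟩ := h₁
  obtain ⟨n2, d2, c2, i2⟩ := h₂
  have hxW : ((x :: W).map Prod.fst).Nodup := by
    rw [List.map_append] at n2
    exact n2.of_append_right
  have hxU : x.1 ∉ U.map Prod.fst := by
    rw [List.map_append] at n1
    have := (List.nodup_append').mp n1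
    simpa using fun h => this.2.2 h (by simp)
  refine ⟨?_, ?_, ?_, ?_⟩
  · rw [List.map_append]
    refine (List.nodup_append').mpr ⟨(by rw [List.map_append] at n1; exact n1.of_append_left),
      hxW, ?_⟩
    intro e he he'
    simp only [List.map_cons, List.mem_cons] at he'
    rcases he' with rfl | he'
    · exact hxU he
    · exact hdisj _ he' he
  · intro oe hoe
    apply d1
    cases U with
    | nil =>
      simp only [List.nil_append, List.head?_cons, Option.mem_some_iff] at hoe
      simp [hoe]
    | cons u t => simpa using hoe
  · unfold List.Chain'
    rw [List.isChain_append]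
    refine ⟨(List.isChain_append.mp c1).1, ?_, ?_⟩
    · exact (List.isChain_append.mp c2).2.1
    · intro a' ha' y hy
      exact (List.isChain_append.mp c1).2.2 a' ha' y (by simpa using hy)
  · intro v hv
    rw [List.map_append, List.dropLast_append_of_ne_nil (by simp)] at hv
    rcases List.mem_append.mp hv with hvl | hvr
    · refine i1 v ?_
      simp only [List.map_append, List.map_cons, List.map_nil, List.dropLast_concat]
      exact hvl
    · apply i2
      rw [List.map_append, List.dropLast_append_of_ne_nil (by simp)]
      exact List.mem_append_right _ hvr

end BidirGraph
namespace BidirGraph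
variable {V E : Type} {B : BidirGraph V E} {r : V}

/-- The reversal splice: follow a trail through `(g,γ)`, then run another trail's
approach to `(g,!γ)` backwards. -/
lemma revglue {P Vp K₀ : List (E × Bool)} {g : E} {γ : Bool}
    (h₁ : B.IsRTrail r (P ++ [(g, γ)]))
    (h₂ : B.IsRTrail r (Vp ++ K₀ ++ [(g, !γ)]))
    (hK : K₀ ≠ [])
    (hdisj : ∀ e ∈ K₀.map Prod.fst, e ∉ P.map Prod.fst) :
    B.IsRTrail r ((P ++ [(g, γ)]) ++ revt K₀) ∧
      ∀ w₀ ∈ K₀.head?, ((P ++ [(g, γ)]) ++ revt K₀).getLast? = some (neg w₀) := by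
  obtain ⟨K₀', wl, rfl⟩ : ∃ K₀' wl, K₀ = K₀' ++ [wl] := by
    rcases List.eq_nil_or_concat K₀ with h | ⟨l, b, h⟩
    · exact absurd h hK
    · exact ⟨l, b, by simpa using h⟩
  set K₀ := K₀' ++ [wl] with hK₀
  have hwl : K₀.getLast? = some wl := List.getLast?_concat
  have h₂' : B.IsRTrail r (Vp ++ (K₀ ++ [(g, !γ)])) := by rwa [← List.append_assoc]
  have cK : (K₀ ++ [(g, !γ)]).Chain' B.lnk := (List.isChain_append.mp h₂'.chain).2.1
  have chainK : K₀.Chain' B.lnk := (List.isChain_append.mp cK).1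
  have junKg : B.lnk wl (g, !γ) := by
    refine (List.isChain_append.mp cK).2.2 wl hwl (g, !γ) (by simp)
  have gK : g ∉ K₀.map Prod.fst := by
    have n₂ := h₂.nodupE
    rw [List.map_append, List.map_append] at n₂
    intro hmem
    exact ((List.nodup_append').mp n₂).2.2 (List.mem_append_right _ hmem) (by simp)
  have revne : revt K₀ ≠ [] := by simp [revt, hK₀]
  have hheadrev : (revt K₀).head? = some (neg wl) := by
    rw [revt, List.head?_reverse, hK₀]
    simp [List.getLast?_concat, neg]
  constructor
  · rw [isRTrail_iff]
    refine ⟨?_, ?_, ?_, ?_⟩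
    · rw [List.map_append, map_fst_revt]
      refine (List.nodup_append').mpr ⟨h₁.nodupE, ?_, ?_⟩
      · rw [List.nodup_reverse]
        have n₂ := h₂.nodupE
        rw [List.map_append, List.map_append] at n₂
        exact n₂.of_append_left.of_append_right
      · intro e he he'
        rw [List.mem_reverse] at he'
        rw [List.map_append] at he
        rcases List.mem_append.mp he with h | h
        · exact hdisj e he' h
        · simp only [List.map_cons, List.map_nil, List.mem_singleton] at h
          subst h
          exact gK he'
    · intro oe hoe
      rw [head?_append_left (by simp)] at hoe
      exact h₁.headr oe hoe
    · unfold List.Chain'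
      rw [List.isChain_append]
      refine ⟨h₁.chain, chain_revt chainK, ?_⟩
      intro a ha y hy
      rw [List.getLast?_concat] at ha
      rw [hheadrev] at hy
      simp only [Option.mem_some_iff] at ha hy
      subst ha; subst hy
      have := lnk_neg_rev junKg
      simpa [neg] using this
    · intro v hv
      rw [List.map_append, List.dropLast_append_of_ne_nil (by simp [hK₀])] at hv
      rcases List.mem_append.mp hv with hvl | hvr
      · simp only [List.map_append, List.map_cons, List.map_nil] at hvl
        rcases List.mem_append.mp hvl with h | h
        · refine h₁.intr v ?_
          simp only [List.map_append, List.map_cons, List.map_nil, List.dropLast_concat]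
          exact h
        · simp only [List.mem_singleton] at h
          subst h
          have h1 : B.ohead (g, γ) = B.otail (g, !γ) := by
            have := otail_neg (B := B) (g, γ)
            simpa [neg] using this.symm
          rw [h1, ← junKg.1]
          refine internal_ne_r_of_middle (L₁ := Vp ++ K₀') (L₂ := [(g, !γ)])
            (a := wl) ?_ (by simp)
          have : Vp ++ K₀ ++ [(g, !γ)] = (Vp ++ K₀') ++ wl :: [(g, !γ)] := by
            simp [hK₀]
          rwa [this] at h₂
      · rw [map_ohead_revt, dropLast_reverse', List.mem_reverse,
          otail_tail_eq chainK] at hvr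
        refine h₂.intr v ?_
        have hsub : v ∈ List.map B.ohead K₀ := (List.dropLast_prefix _).subset hvr
        simp only [List.map_append, List.map_cons, List.map_nil, List.dropLast_concat]
        exact List.mem_append_right _ hsub
  · intro w₀ hw₀
    simp only [Option.mem_def] at hw₀
    rw [List.getLast?_append, revt, List.getLast?_reverse, List.head?_map, hw₀]
    rfl

end BidirGraph
namespace BidirGraph
variable {V E : Type} {B : BidirGraph V E} {r : V}

lemma bool_eq_not_of_ne {a b : Bool} (h : a ≠ b) : a = !b := by
  cases a <;> cases b <;> simp_all

lemma exists_split_last {α : Type*} (p : α → Prop) :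
    ∀ (l : List α), (∃ x ∈ l, p x) →
      ∃ l₁ x l₂, l = l₁ ++ x :: l₂ ∧ p x ∧ ∀ y ∈ l₂, ¬ p y := by
  intro l
  induction l using List.reverseRecOn with
  | nil => rintro ⟨x, hx, -⟩; simp at hx
  | append_singleton l a ih =>
    intro h
    by_cases hpa : p a
    · exact ⟨l, a, [], by simp, hpa, by simp⟩
    · obtain ⟨x, hx, hpx⟩ := h
      rw [List.mem_append] at hx
      rcases hx with hx | hx
      · obtain ⟨l₁, x', l₂, rfl, hpx', hl₂⟩ := ih ⟨x, hx, hpx⟩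
        refine ⟨l₁, x', l₂ ++ [a], by simp, hpx', ?_⟩
        intro y hy
        rcases List.mem_append.mp hy with hy | hy
        · exact hl₂ y hy
        · simp only [List.mem_singleton] at hy; subst hy; exact hpa
      · simp only [List.mem_singleton] at hx; subst hx; exact absurd hpx hpa

/-- The main descent: there is no "bad triple". -/
theorem bt (hclean : B.EdgeClean r) (n : ℕ) :
    ∀ (Q P₁ P₂ : List (E × Bool)) (g : E) (γ : Bool), Q.length < n →
    B.IsRTrail r (P₁ ++ [(g, γ)]) → B.IsRTrail r (P₂ ++ [(g, γ)]) →
    B.IsRTrail r (Q ++ [(g, !γ)]) →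
    (∀ e ∈ P₁.map Prod.fst, e ∉ P₂.map Prod.fst) → False := by
  induction n with
  | zero => intro Q _ _ _ _ h; omega
  | succ n ih =>
    intro Q P₁ P₂ g γ hlen h₁ h₂ hZ hdisj
    -- Q is nonempty, else g is incident with r
    rcases Q.eq_nil_or_concat with rfl | hQcc
    · refine noendr hclean h₁ (List.getLast?_concat) hZ (List.getLast?_concat) ?_
      have : B.otail (g, !γ) = r := hZ.headr _ (by simp)
      rw [← this]
      exact incident_otail (g, !γ)
    by_cases hH : ∃ oe ∈ Q, oe.1 ∈ P₁.map Prod.fst ∨ oe.1 ∈ P₂.map Prod.fst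
    · -- there are hits; take the last one
      obtain ⟨Vq, yy, Wq, rfl, hyp, hWfree⟩ := exists_split_last _ Q hH
      have hWa : ∀ e ∈ Wq.map Prod.fst, e ∉ P₁.map Prod.fst ∧ e ∉ P₂.map Prod.fst := by
        intro e he
        obtain ⟨oe, hoe, rfl⟩ := List.mem_map.mp he
        have := hWfree oe hoe
        push_neg at this
        exact this
      have hlenV : Vq.length < n := by
        rw [List.length_append, List.length_cons] at hlen
        omega
      -- symmetric core
      have core : ∀ (Pa Pb : List (E × Bool)),
          B.IsRTrail r (Pa ++ [(g, γ)]) → B.IsRTrail r (Pb ++ [(g, γ)]) →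
          (∀ e ∈ Pa.map Prod.fst, e ∉ Pb.map Prod.fst) →
          (∀ e ∈ Wq.map Prod.fst, e ∉ Pa.map Prod.fst ∧ e ∉ Pb.map Prod.fst) →
          yy.1 ∈ Pa.map Prod.fst → False := by
        intro Pa Pb ha hb hab hWab hyPa
        obtain ⟨oeY, hmemY, hfstY⟩ := List.mem_map.mp hyPa
        obtain ⟨A₁, B₁, hPa⟩ := List.append_of_mem hmemY
        have hgPa : g ∉ Pa.map Prod.fst := by
          have := ha.nodupE
          rw [List.map_append] at this
          intro hmem
          exact ((List.nodup_append').mp this).2.2 hmem (by simp)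
        have hgPb : g ∉ Pb.map Prod.fst := by
          have := hb.nodupE
          rw [List.map_append] at this
          intro hmem
          exact ((List.nodup_append').mp this).2.2 hmem (by simp)
        -- prefix of Sa ending with oeY
        have haPre : B.IsRTrail r (A₁ ++ [oeY]) := by
          refine rtrail_prefix (L₂ := B₁ ++ [(g, γ)]) ?_
          have : Pa ++ [(g, γ)] = (A₁ ++ [oeY]) ++ (B₁ ++ [(g, γ)]) := by
            rw [hPa]; simp
          rwa [this] at ha
        -- Z with the last-hit occurrence singled out
        have hZ' : B.IsRTrail r (Vq ++ yy :: (Wq ++ [(g, !γ)])) := by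
          have : Vq ++ yy :: Wq ++ [(g, !γ)] = Vq ++ yy :: (Wq ++ [(g, !γ)]) := by simp
          rwa [this] at hZ
        -- yy's head is not r (it is internal in Z)
        have hyhead : B.ohead yy ≠ r :=
          internal_ne_r_of_middle (L₁ := Vq) (L₂ := Wq ++ [(g, !γ)]) hZ' (by simp)
        -- the junction of Z after yy
        have hjun : ∀ nxt ∈ (Wq ++ [(g, !γ)]).head?, B.lnk yy nxt := by
          have c := hZ'.chain
          unfold List.Chain' at c
          rw [List.isChain_append] at c
          exact (List.isChain_cons.mp c.2.1).1
        by_cases hor : yy = oeY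
        · -- case (i): same orientation; swap prefix and reverse back along Pb
          subst hor
          have hKfull : B.IsRTrail r (A₁ ++ yy :: (Wq ++ [(g, !γ)])) := by
            refine swap_prefix haPre hZ' ?_
            intro e he
            rw [List.map_append] at he
            rcases List.mem_append.mp he with h | h
            · intro hmem
              exact (hWab e h).1
                (by rw [hPa, List.map_append]; exact List.mem_append_left _ hmem)
            · simp only [List.map_cons, List.map_nil, List.mem_singleton] at h
              subst h
              intro hmem
              exact hgPa (by rw [hPa, List.map_append]; exact List.mem_append_left _ hmem)
          have hKassoc : B.IsRTrail r ((A₁ ++ yy :: Wq) ++ [(g, !γ)]) := by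
            have heq : A₁ ++ yy :: (Wq ++ [(g, !γ)]) = (A₁ ++ yy :: Wq) ++ [(g, !γ)] := by
              simp
            rwa [heq] at hKfull
          have hKne : A₁ ++ yy :: Wq ≠ [] := by simp
          have hdisjK : ∀ e ∈ (A₁ ++ yy :: Wq).map Prod.fst, e ∉ Pb.map Prod.fst := by
            intro e he hePb
            rw [List.map_append] at he
            rcases List.mem_append.mp he with h | h
            · exact hab e (by rw [hPa, List.map_append]; exact List.mem_append_left _ h) hePb
            · simp only [List.map_cons, List.mem_cons] at h
              rcases h with rfl | h
              · exact hab _ hyPa hePb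
              · exact (hWab e h).2 hePb
          obtain ⟨hG₂, hG₂last⟩ := revglue (Vp := []) (K₀ := A₁ ++ yy :: Wq) hb (by simpa using hKassoc) hKne hdisjK
          obtain ⟨w₀, hw₀⟩ : ∃ w₀, (A₁ ++ yy :: Wq).head? = some w₀ := by
            cases hc : (A₁ ++ yy :: Wq).head?
            · exact absurd (List.head?_eq_none_iff.mp hc) hKne
            · exact ⟨_, rfl⟩
          have hlast := hG₂last w₀ hw₀
          obtain ⟨Kt, hKt⟩ : ∃ Kt, (A₁ ++ yy :: Wq) ++ [(g, !γ)] = w₀ :: Kt := by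
            cases hc : A₁ ++ yy :: Wq with
            | nil => exact absurd hc hKne
            | cons a t =>
              rw [hc] at hw₀
              simp only [List.head?_cons, Option.some_inj] at hw₀
              exact ⟨t ++ [(g, !γ)], by simp [hw₀]⟩
          rw [hKt] at hKassoc
          exact fe hclean hKassoc hG₂ hlast
        · -- case (ii): opposite orientation; descend to a smaller bad triple
          have hb2 : yy.2 = !oeY.2 :=
            bool_eq_not_of_ne (fun h => hor (Prod.ext_iff.mpr ⟨hfstY.symm, h⟩))
          have hyy : yy = neg oeY := Prod.ext_iff.mpr ⟨hfstY.symm, hb2⟩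
          have hoY1Pb : oeY.1 ∉ Pb.map Prod.fst := fun h => hab _ (hfstY ▸ hyPa) (hfstY ▸ h)
          have hoY1g : oeY.1 ≠ g := fun h => hgPa (by rw [← hfstY] at hyPa; rwa [h] at hyPa)
          have hoY1W : oeY.1 ∉ Wq.map Prod.fst := fun h => (hWab _ h).1 (hfstY ▸ hyPa)
          have hotail : B.otail oeY ≠ r := by
            have : B.otail oeY = B.ohead yy := by rw [hyy, ohead_neg]
            rwa [this]
          -- build the new second trail
          have hnew₂ : B.IsRTrail r ((Pb ++ [(g, γ)] ++ revt Wq) ++ [oeY]) := by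
            cases hWq : Wq with
            | nil =>
              have hl : B.lnk (g, γ) oeY := by
                have hj : B.lnk yy (g, !γ) := by
                  refine hjun (g, !γ) ?_
                  rw [hWq]; simp
                have := lnk_neg_rev hj
                rw [hyy] at this
                simpa [neg] using this
              simp only [hWq, revt, List.map_nil, List.reverse_nil, List.append_nil]
              refine append_one hb (List.getLast?_concat) hl hotail ?_
              rw [List.map_append]
              intro hmem
              rcases List.mem_append.mp hmem with h | h
              · exact hoY1Pb h
              · simp only [List.map_cons, List.map_nil, List.mem_singleton] at h
                exact hoY1g h
            | cons w Wt =>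
              rw [← hWq]
              have hZassoc : B.IsRTrail r ((Vq ++ [yy]) ++ Wq ++ [(g, !γ)]) := by
                have heq : (Vq ++ [yy]) ++ Wq ++ [(g, !γ)]
                    = Vq ++ yy :: (Wq ++ [(g, !γ)]) := by simp
                rwa [heq]
              have hWne : Wq ≠ [] := by rw [hWq]; simp
              obtain ⟨hbase, hbaselast⟩ := revglue (Vp := Vq ++ [yy]) hb hZassoc hWne
                (fun e he => fun hmem => (hWab e he).2 hmem)
              obtain ⟨w₀, hw₀⟩ : ∃ w₀, Wq.head? = some w₀ := by
                rw [hWq]; exact ⟨w, rfl⟩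
              have hl : B.lnk (neg w₀) oeY := by
                have hj : B.lnk yy w₀ := by
                  refine hjun w₀ ?_
                  rw [hWq] at hw₀ ⊢
                  simpa using hw₀
                have := lnk_neg_rev hj
                rw [hyy] at this
                simpa [neg] using this
              refine append_one hbase (hbaselast w₀ hw₀) hl hotail ?_
              rw [List.map_append, List.map_append, map_fst_revt]
              intro hmem
              rcases List.mem_append.mp hmem with h | h
              · rcases List.mem_append.mp h with h' | h'
                · exact hoY1Pb h'
                · simp only [List.map_cons, List.map_nil, List.mem_singleton] at h'
                  exact hoY1g h'
              · rw [List.mem_reverse] at h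
                exact hoY1W h
          -- the new reverse witness
          have hnewZ : B.IsRTrail r (Vq ++ [neg oeY]) := by
            rw [← hyy]
            refine rtrail_prefix (L₂ := Wq ++ [(g, !γ)]) ?_
            have heq : (Vq ++ [yy]) ++ (Wq ++ [(g, !γ)]) = Vq ++ yy :: (Wq ++ [(g, !γ)]) := by
              simp
            rwa [heq]
          -- the new first trail
          have hnew₁ : B.IsRTrail r (A₁ ++ [oeY]) := haPre
          -- new disjointness
          have hnewdisj : ∀ e ∈ A₁.map Prod.fst,
              e ∉ (Pb ++ [(g, γ)] ++ revt Wq).map Prod.fst := by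
            intro e he hmem
            have hePa : e ∈ Pa.map Prod.fst := by
              rw [hPa, List.map_append]; exact List.mem_append_left _ he
            rw [List.map_append, List.map_append, map_fst_revt] at hmem
            rcases List.mem_append.mp hmem with h | h
            · rcases List.mem_append.mp h with h' | h'
              · exact hab e hePa h'
              · simp only [List.map_cons, List.map_nil, List.mem_singleton] at h'
                subst h'
                exact hgPa hePa
            · rw [List.mem_reverse] at h
              exact (hWab e h).1 hePa
          -- apply the induction hypothesis: note (oeY.1, oeY.2) = oeY and
          -- (oeY.1, !oeY.2) = neg oeY definitionally
          exact ih Vq A₁ (Pb ++ [(g, γ)] ++ revt Wq) oeY.1 oeY.2 hlenV hnew₁ hnew₂ hnewZ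
            hnewdisj
      rcases hyp with h | h
      · exact core P₁ P₂ h₁ h₂ hdisj hWa h
      · refine core P₂ P₁ h₂ h₁ ?_ (fun e he => ⟨(hWa e he).2, (hWa e he).1⟩) h
        intro e he hmem
        exact hdisj e hmem he
    · -- no hits: direct contradiction
      push_neg at hH
      obtain ⟨w₀, Qt, rfl⟩ : ∃ w₀ Qt, Q = w₀ :: Qt := by
        cases Q with
        | nil =>
          obtain ⟨L, b, hb⟩ := hQcc
          exact absurd hb.symm (by simp)
        | cons a t => exact ⟨a, t, rfl⟩
      have hdQ : ∀ e ∈ (w₀ :: Qt).map Prod.fst, e ∉ P₁.map Prod.fst := by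
        intro e he hmem
        obtain ⟨oe, hoe, rfl⟩ := List.mem_map.mp he
        exact (hH oe hoe).1 hmem
      obtain ⟨hG, hGlast⟩ := revglue (Vp := []) (K₀ := w₀ :: Qt) h₁ (by simpa using hZ)
        (by simp) hdQ
      have hZc : B.IsRTrail r (w₀ :: (Qt ++ [(g, !γ)])) := by simpa using hZ
      exact fe hclean hZc hG (hGlast w₀ (by simp))

end BidirGraph
namespace BidirGraph
variable {V E : Type} {B : BidirGraph V E} {r : V}

lemma main_aux (hclean : B.EdgeClean r) (n : ℕ) :
    ∀ (T T' : List (E × Bool)), T.length + T'.length ≤ n →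
    B.IsRTrail r T → B.IsRTrail r T' →
    (∃ e b b', (e, b) ∈ T ∧ (e, b') ∈ T') →
    ∃ e b b', (e, b) ∈ T ∧ (e, b') ∈ T' ∧ B.TrailDirectable r e := by
  induction n with
  | zero =>
    rintro T T' hl hT hT' ⟨e, b, b', h1, h2⟩
    have := List.length_pos_of_mem h1
    omega
  | succ n ih =>
    rintro T T' hl hT hT' ⟨e, b, b', h1, h2⟩
    obtain ⟨T₁, T₂, rfl⟩ := List.append_of_mem h1
    cases T₂ with
    | cons t ts =>
      obtain ⟨d, c, c', hd, hd', hdir⟩ := ih (T₁ ++ [(e, b)]) T'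
        (by simp only [List.length_append, List.length_cons, List.length_nil] at hl ⊢; omega)
        (rtrail_prefix (L₂ := t :: ts) (by simpa using hT)) hT'
        ⟨e, b, b', by simp, h2⟩
      refine ⟨d, c, c', ?_, hd', hdir⟩
      rcases List.mem_append.mp hd with h | h
      · exact List.mem_append_left _ h
      · simp only [List.mem_singleton] at h
        rw [h]
        exact List.mem_append_right _ (by simp)
    | nil =>
      obtain ⟨T'₁, T'₂, rfl⟩ := List.append_of_mem h2
      cases T'₂ with
      | cons t ts =>
        obtain ⟨d, c, c', hd, hd', hdir⟩ := ih (T₁ ++ [(e, b)]) (T'₁ ++ [(e, b')])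
          (by simp only [List.length_append, List.length_cons, List.length_nil] at hl ⊢; omega)
          hT (rtrail_prefix (L₂ := t :: ts) (by simpa using hT'))
          ⟨e, b, b', by simp, by simp⟩
        refine ⟨d, c, c', hd, ?_, hdir⟩
        rcases List.mem_append.mp hd' with h | h
        · exact List.mem_append_left _ h
        · simp only [List.mem_singleton] at h
          rw [h]
          exact List.mem_append_right _ (by simp)
      | nil =>
        by_cases hdire : B.TrailDirectable r e
        · exact ⟨e, b, b', h1, h2, hdire⟩
        by_cases hsh : ∃ f, f ∈ T₁.map Prod.fst ∧ f ∈ T'₁.map Prod.fst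
        · obtain ⟨f, hf1, hf2⟩ := hsh
          obtain ⟨oe1, hoe1, hoe1f⟩ := List.mem_map.mp hf1
          obtain ⟨oe2, hoe2, hoe2f⟩ := List.mem_map.mp hf2
          obtain ⟨d, cc, cc', hd, hd', hdird⟩ := ih T₁ T'₁
            (by simp only [List.length_append, List.length_cons, List.length_nil] at hl ⊢; omega)
            (rtrail_prefix (L₂ := [(e, b)]) (by simpa using hT))
            (rtrail_prefix (L₂ := [(e, b')]) (by simpa using hT'))
            ⟨f, oe1.2, oe2.2, by rw [← hoe1f]; simpa using hoe1, by rw [← hoe2f]; simpa using hoe2⟩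
          exact ⟨d, cc, cc', List.mem_append_left _ hd, List.mem_append_left _ hd', hdird⟩
        · push_neg at hsh
          have hTc : B.IsRTrail r (T₁ ++ [(e, b)]) := by simpa using hT
          have hT'c : B.IsRTrail r (T'₁ ++ [(e, b')]) := by simpa using hT'
          have hZ : ∃ M, B.IsRTrail r M ∧ M.getLast? = some (e, !b) := by
            by_contra hno
            exact hdire ⟨b, ⟨T₁ ++ [(e, b)], hTc, List.getLast?_concat⟩, hno⟩
          obtain ⟨M, hM, hMl⟩ := hZ
          obtain ⟨Q, rfl⟩ := List.getLast?_eq_some_iff.mp hMl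
          by_cases hbb : b' = b
          · subst hbb
            exact (bt hclean (Q.length + 1) Q T₁ T'₁ e b' (by omega) hTc hT'c hM hsh).elim
          · have hb' : b' = !b := bool_eq_not_of_ne hbb
            subst hb'
            cases hT'₁ : T'₁ with
            | nil =>
              rw [hT'₁] at hT'c
              refine (noendr hclean hTc (List.getLast?_concat) hT'c (by simp) ?_).elim
              have : B.otail (e, !b) = r := hT'c.headr _ (by simp)
              rw [← this]
              exact incident_otail (e, !b)
            | cons w₀ rest =>
              rw [hT'₁] at hT'c
              have hdQ : ∀ f ∈ (w₀ :: rest).map Prod.fst, f ∉ T₁.map Prod.fst := by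
                intro f hf hmem
                exact hsh f hmem (by rw [hT'₁]; exact hf)
              obtain ⟨hG, hGlast⟩ := revglue (Vp := []) (K₀ := w₀ :: rest) hTc
                (by simpa using hT'c) (by simp) hdQ
              have hT'cons : B.IsRTrail r (w₀ :: (rest ++ [(e, !b)])) := by
                simpa using hT'c
              exact (fe hclean hT'cons hG (hGlast w₀ (by simp))).elim

end BidirGraph

open BidirGraph in
/-- In an edge-clean rooted bidirected graph, two proper `r`-trails (each
containing a trail-directable edge) that share an edge must share a trail-directable edge. -/
theorem stmt4 {V E : Type} (B : BidirGraph V E) (r : V)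
    (hclean : B.EdgeClean r)
    (T T' : List (E × Bool))
    (hT : B.IsRTrail r T) (hT' : B.IsRTrail r T')
    (hTproper : ∃ oe ∈ T, B.TrailDirectable r oe.1)
    (hT'proper : ∃ oe ∈ T', B.TrailDirectable r oe.1)
    (hshare : ∃ (e : E) (b b' : Bool), (e, b) ∈ T ∧ (e, b') ∈ T') :
    ∃ (e : E) (b b' : Bool), (e, b) ∈ T ∧ (e, b') ∈ T' ∧ B.TrailDirectable r e :=
  main_aux hclean (T.length + T'.length) T T' le_rfl hT hT' hshare
end
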